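/- arXiv:2106.03163 — 6 statements merged into one kernel-verified Lean document; each statement's English description precedes it below -/
import Mathlib

section
/- Let D⁺ ⊆ ℝ be a nondegenerate interval with finite supremum s, let ℓ ∈ [0,1]ⁿ and α ∈ (0,1). Suppose that for every Borel probability measure ν supported on D⁺ with CDF F, taking X = (X_1,…,X_n) i.i.d. with law ν, one has P( F(t) ≥ G_{X,ℓ}(t) for all t ∈ ℝ ) ≥ 1 − α. Then, with U = (U_1,…,U_n) i.i.d. Uniform(0,1) and order statistics U_{(1)} ≤ … ≤ U_{(n)}: P( U_{(i)} ≥ ℓ_{(i)} for all 1 ≤ i ≤ n ) ≥ 1 − α. -/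
open MeasureTheory Set

/-- The sorted rearrangement (order statistics) of a finite real vector:
`sortedVec x i` is the (i+1)-st order statistic `x_{(i+1)}` (0-indexed). -/
noncomputable def sortedVec {n : ℕ} (x : Fin n → ℝ) : Fin n → ℝ :=
  x ∘ ⇑(Tuple.sort x)

/-- The induced mean `m(x, ℓ) = s - ∑ ℓ_{(i)} (x_{(i+1)} - x_{(i)})`, with `x_{(n+1)} := s`. -/
noncomputable def inducedMean {n : ℕ} (s : ℝ) (x ℓ : Fin n → ℝ) : ℝ :=
  s - ∑ i : Fin n, sortedVec ℓ i * ((Fin.snoc (sortedVec x) s : Fin (n+1) → ℝ) i.succ - sortedVec x i)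

/-- `S_{D,T}(x) = {y ∈ Dⁿ : T y ≤ T x}`. -/
def SsetD {n : ℕ} (D : Set ℝ) (T : (Fin n → ℝ) → ℝ) (x : Fin n → ℝ) : Set (Fin n → ℝ) :=
  {y | (∀ i, y i ∈ D) ∧ T y ≤ T x}

/-- `b_{D,T}(x, u) = sup_{z ∈ S_{D,T}(x)} m_{sup D}(z, u)`. -/
noncomputable def bfun {n : ℕ} (D : Set ℝ) (T : (Fin n → ℝ) → ℝ) (x u : Fin n → ℝ) : ℝ :=
  sSup ((fun z => inducedMean (sSup D) z u) '' SsetD D T x)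

/-- The uniform probability measure on `[0,1]`. -/
noncomputable def unif01 : Measure ℝ := volume.restrict (Icc (0:ℝ) 1)

/-- The law of an i.i.d. sample of size `n` from Uniform(0,1). -/
noncomputable def unifPi (n : ℕ) : Measure (Fin n → ℝ) := Measure.pi fun _ => unif01

/-- The `p`-quantile of the random variable `Y` under `μ`:
`Q(p, Y) = inf {y : P(Y ≤ y) ≥ p}`. -/
noncomputable def rquantile {Ω : Type*} [MeasurableSpace Ω] (μ : Measure Ω)
    (Y : Ω → ℝ) (p : ℝ) : ℝ :=
  sInf {y : ℝ | ENNReal.ofReal p ≤ μ {ω | Y ω ≤ y}}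

/-- The upper confidence bound `b^α_{D,T}(x) = Q(1 - α, b_{D,T}(x, U))`, `U` i.i.d. Uniform(0,1). -/
noncomputable def ucb {n : ℕ} (D : Set ℝ) (T : (Fin n → ℝ) → ℝ) (α : ℝ)
    (x : Fin n → ℝ) : ℝ :=
  rquantile (unifPi n) (bfun D T x) (1 - α)

/-- The stairstep function `G_{x,ℓ}` with top value at `s`. -/
noncomputable def stairstep {n : ℕ} (s : ℝ) (x ℓ : Fin n → ℝ) (t : ℝ) : ℝ :=
  if s ≤ t then 1 else sSup ({0} ∪ (sortedVec ℓ '' {i | sortedVec x i ≤ t}))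

/-- The `k`-th smallest value (1-indexed) among `m 0, …, m (L-1)`. -/
noncomputable def kthSmallest {L : ℕ} (m : Fin L → ℝ) (k : ℕ) : ℝ :=
  sInf {y : ℝ | k ≤ Nat.card {j : Fin L // m j ≤ y}}

instance unif01_prob : IsProbabilityMeasure unif01 := by
  constructor
  rw [unif01, Measure.restrict_apply_univ, Real.volume_Icc]
  norm_num

theorem stmt9_aux_sorted_comp {n : ℕ} {φ : ℝ → ℝ} (hφ : Monotone φ) (u : Fin n → ℝ) :
    sortedVec (φ ∘ u) = φ ∘ sortedVec u := by
  have h : (φ ∘ u) ∘ (Tuple.sort u) = (φ ∘ u) ∘ Tuple.sort (φ ∘ u) := by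
    refine Tuple.comp_sort_eq_comp_iff_monotone.mpr ?_
    have h2 : (φ ∘ u) ∘ (Tuple.sort u) = φ ∘ (u ∘ ⇑(Tuple.sort u)) := rfl
    rw [h2]
    exact hφ.comp (Tuple.monotone_sort u)
  rw [sortedVec, sortedVec, ← h]
  rfl

/-- if `G_{X,ℓ}` is a `(1-α)` lower confidence bound for the CDF of
every distribution supported on a nondegenerate interval `D⁺` with finite
supremum, then `P(∀ i, U_{(i)} ≥ ℓ_{(i)}) ≥ 1 - α` for i.i.d. Uniform(0,1)
order statistics. -/
theorem stmt9 {n : ℕ} (Dp : Set ℝ) (hconn : Dp.OrdConnected)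
    (hnondeg : ∃ a ∈ Dp, ∃ b ∈ Dp, a < b) (hbdd : BddAbove Dp)
    (ℓ : Fin n → ℝ) (hℓ : ∀ i, ℓ i ∈ Set.Icc (0:ℝ) 1)
    (α : ℝ) (hα : α ∈ Set.Ioo (0:ℝ) 1)
    (hlcb : ∀ (ν : Measure ℝ) [IsProbabilityMeasure ν], (∀ᵐ t ∂ν, t ∈ Dp) →
      ENNReal.ofReal (1 - α)
        ≤ (Measure.pi fun _ : Fin n => ν)
            {x | ∀ t : ℝ, stairstep (sSup Dp) x ℓ t ≤ (ν (Set.Iic t)).toReal}) :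
    ENNReal.ofReal (1 - α)
      ≤ unifPi n {u | ∀ i : Fin n, sortedVec ℓ i ≤ sortedVec u i} := by
  obtain ⟨a, ha, b, hb, hab⟩ := hnondeg
  set s := sSup Dp with hs
  have hbs : b ≤ s := le_csSup hbdd hb
  have has : a < s := lt_of_lt_of_le hab hbs
  have hsa : (0:ℝ) < s - a := sub_pos.mpr has
  have hIco : Set.Ico a s ⊆ Dp := by
    intro t ht
    obtain ⟨p, hp, htp⟩ := exists_lt_of_lt_csSup ⟨a, ha⟩ ht.2
    exact hconn.out ha hp ⟨ht.1, htp.le⟩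
  -- the affine measurable equivalence sending [0,1] to [a,s]
  set φ : ℝ → ℝ := fun v => a + (s - a) * v with hφdef
  set ψ : ℝ → ℝ := fun t => (t - a) / (s - a) with hψdef
  have hψφ : Function.LeftInverse ψ φ := by
    intro v; simp only [hφdef, hψdef]; field_simp; ring
  have hφψ : Function.RightInverse ψ φ := by
    intro t; simp only [hφdef, hψdef]; field_simp; ring
  have hφle : ∀ x y : ℝ, φ x ≤ φ y ↔ x ≤ y := by
    intro x y
    simp only [hφdef]
    constructor
    · intro h; nlinarith
    · intro h; nlinarith
  have hφmono : Monotone φ := fun x y hxy => (hφle x y).mpr hxy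
  have hφmeas : Measurable φ := by fun_prop
  have hψmeas : Measurable ψ := by fun_prop
  let φe : ℝ ≃ᵐ ℝ :=
    { toFun := φ, invFun := ψ, left_inv := hψφ, right_inv := hφψ,
      measurable_toFun := hφmeas,
      measurable_invFun := hψmeas }
  set ν : Measure ℝ := Measure.map φe unif01 with hν
  have hνapp : ∀ S : Set ℝ, ν S = unif01 (φ ⁻¹' S) := fun S =>
    MeasurableEquiv.map_apply φe S
  haveI : IsProbabilityMeasure ν := Measure.isProbabilityMeasure_map
    φe.measurable.aemeasurable
  have hunif_apply : ∀ S : Set ℝ, unif01 S = volume (S ∩ Set.Icc 0 1) := by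
    intro S
    rw [unif01, Measure.restrict_apply' measurableSet_Icc]
  -- ν is a.e. supported on Dp
  have hae : ∀ᵐ t ∂ν, t ∈ Dp := by
    rw [ae_iff]
    have : ν {t | ¬ t ∈ Dp} = unif01 (φ ⁻¹' {t | ¬ t ∈ Dp}) := hνapp _
    rw [this, hunif_apply]
    have hsub2 : φ ⁻¹' {t | ¬ t ∈ Dp} ∩ Set.Icc 0 1 ⊆ {1} := by
      intro v ⟨hv1, hv2⟩
      by_contra hne
      apply hv1
      apply hIco
      constructor
      · simp only [hφdef]; nlinarith [hv2.1]
      · have hlt : v < 1 := lt_of_le_of_ne hv2.2 hne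
        simp only [hφdef]; nlinarith
    exact le_antisymm (le_trans (measure_mono hsub2) (by simp)) (zero_le)
  -- CDF of ν at φ v equals v for v ∈ [0,1]
  have hcdf : ∀ v ∈ Set.Icc (0:ℝ) 1, (ν (Set.Iic (φ v))).toReal = v := by
    intro v hv
    have h1 : φ ⁻¹' Set.Iic (φ v) = Set.Iic v := by
      ext x; simp [Set.mem_preimage, Set.mem_Iic, hφle]
    rw [hνapp, h1, hunif_apply]
    have h2 : Set.Iic v ∩ Set.Icc 0 1 = Set.Icc 0 v := by
      ext x
      simp only [Set.mem_inter_iff, Set.mem_Iic, Set.mem_Icc]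
      constructor
      · rintro ⟨h3, h4, h5⟩; exact ⟨h4, h3⟩
      · rintro ⟨h3, h4⟩; exact ⟨h4, h3, le_trans h4 hv.2⟩
    rw [h2, Real.volume_Icc, sub_zero, ENNReal.toReal_ofReal hv.1]
  -- apply the hypothesis to ν
  have hmain := hlcb ν hae
  -- pi ν is the pushforward of unifPi under the coordinatewise map
  set Φe : (Fin n → ℝ) ≃ᵐ (Fin n → ℝ) := MeasurableEquiv.piCongrRight fun _ => φe
    with hΦe
  haveI : SigmaFinite unif01 := inferInstance
  have hpreserve : MeasurePreserving (fun u : Fin n → ℝ => fun i => φ (u i))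
      (unifPi n) (Measure.pi fun _ : Fin n => ν) := by
    refine measurePreserving_pi _ _ fun i => ?_
    exact ⟨φe.measurable, rfl⟩
  have hpi_eq : (Measure.pi fun _ : Fin n => ν) = Measure.map Φe (unifPi n) := by
    rw [← hpreserve.map_eq]
    rfl
  set E : Set (Fin n → ℝ) :=
    {x | ∀ t : ℝ, stairstep s x ℓ t ≤ (ν (Set.Iic t)).toReal} with hE
  have hmap : (Measure.pi fun _ : Fin n => ν) E = unifPi n (Φe ⁻¹' E) := by
    rw [hpi_eq, MeasurableEquiv.map_apply]
  -- a.e. every coordinate is in [0,1]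
  have haeu : ∀ᵐ u ∂(unifPi n), ∀ i, u i ∈ Set.Icc (0:ℝ) 1 := by
    rw [ae_iff]
    have hc : {u : Fin n → ℝ | ¬ ∀ i, u i ∈ Set.Icc (0:ℝ) 1}
        = (Set.pi Set.univ fun _ : Fin n => Set.Icc (0:ℝ) 1)ᶜ := by
      ext u
      simp only [Set.mem_setOf_eq, Set.mem_compl_iff, Set.mem_pi, Set.mem_univ,
        true_implies]
    rw [hc]
    haveI : IsProbabilityMeasure (unifPi n) := by
      rw [unifPi]; infer_instance
    rw [measure_compl (MeasurableSet.univ_pi fun _ => measurableSet_Icc)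
      (measure_ne_top _ _)]
    rw [unifPi, Measure.pi_pi]
    have h1 : unif01 (Set.Icc (0:ℝ) 1) = 1 := by
      rw [hunif_apply]
      simp [Real.volume_Icc]
    simp [h1, measure_univ]
  -- pointwise inclusion
  have hincl : ∀ u : Fin n → ℝ, (∀ i, u i ∈ Set.Icc (0:ℝ) 1) → u ∈ Φe ⁻¹' E →
      ∀ i : Fin n, sortedVec ℓ i ≤ sortedVec u i := by
    intro u hu huE i
    have hx : Φe u = φ ∘ u := rfl
    have hxE : ∀ t : ℝ, stairstep s (φ ∘ u) ℓ t ≤ (ν (Set.Iic t)).toReal := by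
      intro t
      have := huE t
      rwa [hx] at this
    have hsort : sortedVec (φ ∘ u) = φ ∘ sortedVec u :=
      stmt9_aux_sorted_comp hφmono u
    set v := sortedVec u i with hv
    have hvmem : v ∈ Set.Icc (0:ℝ) 1 := hu _
    have hℓi : sortedVec ℓ i ∈ Set.Icc (0:ℝ) 1 := hℓ _
    by_cases hcase : s ≤ φ v
    · -- then v ≥ 1
      have hφ1 : φ 1 = s := by simp only [hφdef]; ring
      have h1 : φ 1 ≤ φ v := by rw [hφ1]; exact hcase
      have : (1:ℝ) ≤ v := (hφle 1 v).mp h1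
      linarith [hℓi.2]
    · push_neg at hcase
      have hstep := hxE (φ v)
      rw [stairstep, if_neg (not_le.mpr hcase)] at hstep
      have hmem : sortedVec ℓ i ∈
          ({0} ∪ (sortedVec ℓ '' {j | sortedVec (φ ∘ u) j ≤ φ v}) : Set ℝ) := by
        right
        refine ⟨i, ?_, rfl⟩
        show sortedVec (φ ∘ u) i ≤ φ v
        rw [hsort, hv]
        exact le_rfl
      have hbddS : BddAbove
          ({0} ∪ (sortedVec ℓ '' {j | sortedVec (φ ∘ u) j ≤ φ v}) : Set ℝ) := by
        refine ⟨1, ?_⟩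
        rintro y (hy | ⟨j, _, rfl⟩)
        · simp only [Set.mem_singleton_iff] at hy; simp [hy]
        · exact (hℓ _).2
      have hle1 : sortedVec ℓ i ≤ sSup
          ({0} ∪ (sortedVec ℓ '' {j | sortedVec (φ ∘ u) j ≤ φ v}) : Set ℝ) :=
        le_csSup hbddS hmem
      have hfin : (ν (Set.Iic (φ v))).toReal = v := hcdf v hvmem
      linarith
  -- conclude
  calc ENNReal.ofReal (1 - α) ≤ (Measure.pi fun _ : Fin n => ν) E := hmain
    _ = unifPi n (Φe ⁻¹' E) := hmap
    _ ≤ unifPi n {u | ∀ i : Fin n, sortedVec ℓ i ≤ sortedVec u i} := by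
        refine measure_mono_ae ?_
        filter_upwards [haeu] with u hu huE
        exact hincl u hu huE
end

section
/- Let b ∈ ℝ and D⁺ := (−∞, b]. Let ℓ ∈ [0,1]ⁿ and α ∈ (0,1), and suppose that for every Borel probability measure ν supported on D⁺ with CDF F, taking X i.i.d. of size n from ν, P( F(t) ≥ G_{X,ℓ}(t) for all t ∈ ℝ ) ≥ 1 − α (i.e., G_{X,ℓ} is a (1−α) lower confidence bound for the CDF on D⁺). Then for every x ∈ (D⁺)ⁿ, using the ordering function T(y) := m_{D⁺}(y,ℓ), the resulting upper confidence bound satisfies b^α_{D⁺,T}(x) ≤ m_{D⁺}(x,ℓ). -/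
open MeasureTheory Set

/- ### Auxiliary lemmas -/

lemma sortedVec_monotone {n : ℕ} (x : Fin n → ℝ) : Monotone (sortedVec x) :=
  Tuple.monotone_sort x

lemma sortedVec_add_const {n : ℕ} (x : Fin n → ℝ) (c : ℝ) :
    sortedVec (fun i => x i + c) = fun i => sortedVec x i + c := by
  have h : (fun i => x i + c) ∘ ⇑(Tuple.sort x)
      = (fun i => x i + c) ∘ ⇑(Tuple.sort (fun i => x i + c)) := by
    apply Tuple.comp_sort_eq_comp_iff_monotone.mpr
    intro a b hab
    exact add_le_add_left (Tuple.monotone_sort x hab) c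
  funext i
  exact (congrFun h i).symm

lemma snoc_gap {n : ℕ} (b : ℝ) (z : Fin n → ℝ) (hz : ∀ i, z i ≤ b) (i : Fin n) :
    sortedVec z i ≤ (Fin.snoc (sortedVec z) b : Fin (n+1) → ℝ) i.succ := by
  rcases lt_or_ge ((i : ℕ) + 1) n with h | h
  · have he : (i.succ : Fin (n+1)) = Fin.castSucc ⟨(i : ℕ) + 1, h⟩ := by
      ext; simp
    rw [he, Fin.snoc_castSucc]
    exact sortedVec_monotone z (by simp [Fin.le_def])
  · have he : (i.succ : Fin (n+1)) = Fin.last n := by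
      ext; simp; omega
    rw [he, Fin.snoc_last]
    exact hz _

lemma inducedMean_le {n : ℕ} (b : ℝ) (z v w : Fin n → ℝ) (hz : ∀ i, z i ≤ b)
    (h : ∀ i, sortedVec v i ≤ sortedVec w i) :
    inducedMean b z w ≤ inducedMean b z v := by
  unfold inducedMean
  apply sub_le_sub_left
  apply Finset.sum_le_sum
  intro i _
  exact mul_le_mul_of_nonneg_right (h i) (sub_nonneg.2 (snoc_gap b z hz i))

/-- if `G_{X,ℓ}` is a `(1-α)` lower confidence bound for the CDF of
every distribution supported on `D⁺ = (-∞, b]`, then, with ordering function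
`T(y) = m_{D⁺}(y, ℓ)`, the UCB satisfies `b^α_{D⁺,T}(x) ≤ m_{D⁺}(x, ℓ)`. -/
theorem stmt10 {n : ℕ} (b : ℝ) (ℓ : Fin n → ℝ) (hℓ : ∀ i, ℓ i ∈ Set.Icc (0:ℝ) 1)
    (α : ℝ) (hα : α ∈ Set.Ioo (0:ℝ) 1)
    (hlcb : ∀ (ν : Measure ℝ) [IsProbabilityMeasure ν], (∀ᵐ t ∂ν, t ≤ b) →
      ENNReal.ofReal (1 - α)
        ≤ (Measure.pi fun _ : Fin n => ν)
            {x | ∀ t : ℝ, stairstep b x ℓ t ≤ (ν (Set.Iic t)).toReal}) :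
    ∀ x : Fin n → ℝ, (∀ i, x i ≤ b) →
      ucb (Set.Iic b) (fun y => inducedMean b y ℓ) α x ≤ inducedMean b x ℓ := by
  intro x hx
  set T : (Fin n → ℝ) → ℝ := fun y => inducedMean b y ℓ with hT
  have hbfun : ∀ u : Fin n → ℝ,
      bfun (Iic b) T x u = sSup ((fun z => inducedMean b z u) '' SsetD (Iic b) T x) := by
    intro u; unfold bfun; rw [csSup_Iic]
  have hxS : x ∈ SsetD (Iic b) T x := ⟨fun i => hx i, le_refl _⟩
  -- box
  set box : Set (Fin n → ℝ) := Set.pi Set.univ (fun _ => Icc (0:ℝ) 1) with hboxdef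
  have hboxm : MeasurableSet box := MeasurableSet.univ_pi fun _ => measurableSet_Icc
  haveI hunifprob : IsProbabilityMeasure unif01 := by
    constructor
    rw [unif01, Measure.restrict_apply MeasurableSet.univ, univ_inter, Real.volume_Icc]
    norm_num
  haveI hPiProb : IsProbabilityMeasure (unifPi n) := by unfold unifPi; infer_instance
  have hboxfull : unifPi n box = 1 := by
    rw [unifPi, hboxdef, Measure.pi_pi]
    have h1 : unif01 (Icc (0:ℝ) 1) = 1 := by
      rw [unif01, Measure.restrict_apply measurableSet_Icc, inter_self, Real.volume_Icc]
      norm_num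
    simp [h1]
  have hboxcompl : unifPi n boxᶜ = 0 := by
    rw [measure_compl hboxm (measure_ne_top _ _), measure_univ, hboxfull, tsub_self]
  -- deterministic facts
  have fact1 : ∀ u : Fin n → ℝ, (∀ i, sortedVec ℓ i ≤ sortedVec u i) →
      bfun (Iic b) T x u ≤ T x := by
    intro u hdom
    rw [hbfun]
    refine csSup_le ⟨inducedMean b x u, ⟨x, hxS, rfl⟩⟩ ?_
    rintro y ⟨z, hzS, rfl⟩
    exact (inducedMean_le b z ℓ u hzS.1 hdom).trans hzS.2
  have fact2 : ∀ u : Fin n → ℝ, u ∈ box →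
      inducedMean b x (fun _ => (1:ℝ)) ≤ bfun (Iic b) T x u := by
    intro u hu
    have hu' : ∀ i, u i ∈ Icc (0:ℝ) 1 := fun i => hu i (mem_univ i)
    have h1 : inducedMean b x (fun _ => (1:ℝ)) ≤ inducedMean b x u := by
      apply inducedMean_le b x u (fun _ => (1:ℝ)) hx
      intro i
      exact (hu' (Tuple.sort u i)).2
    rw [hbfun]
    refine h1.trans (le_csSup ?_ ⟨x, hxS, rfl⟩)
    refine ⟨b, ?_⟩
    rintro y ⟨z, hzS, rfl⟩
    show inducedMean b z u ≤ b
    unfold inducedMean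
    have hnn : 0 ≤ ∑ i : Fin n, sortedVec u i *
        ((Fin.snoc (sortedVec z) b : Fin (n+1) → ℝ) i.succ - sortedVec z i) := by
      apply Finset.sum_nonneg
      intro i _
      exact mul_nonneg (hu' (Tuple.sort u i)).1 (sub_nonneg.2 (snoc_gap b z hzS.1 i))
    linarith
  -- the shifted uniform distribution ν on [b-1, b]
  set c : ℝ := b - 1 with hc
  have hmc : Measurable (fun t : ℝ => t + c) := measurable_add_const c
  set ν : Measure ℝ := unif01.map (fun t => t + c) with hν
  haveI hνprob : IsProbabilityMeasure ν := by
    rw [hν]; exact Measure.isProbabilityMeasure_map hmc.aemeasurable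
  have hνsupp : ∀ᵐ t ∂ν, t ≤ b := by
    rw [ae_iff]
    have hset : {t : ℝ | ¬ t ≤ b} = Ioi b := by ext t; simp [not_le]
    rw [hset, hν, Measure.map_apply hmc measurableSet_Ioi]
    have hpre : (fun t : ℝ => t + c) ⁻¹' Ioi b = Ioi 1 := by
      ext t; simp only [mem_preimage, mem_Ioi, hc]; constructor <;> intro h <;> linarith
    rw [hpre, unif01, Measure.restrict_apply measurableSet_Ioi]
    have : Ioi (1:ℝ) ∩ Icc 0 1 = ∅ := by
      apply Set.eq_empty_iff_forall_notMem.mpr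
      rintro t ⟨h1, h2, h3⟩
      exact absurd h3 (not_le.mpr (mem_Ioi.mp h1))
    rw [this, measure_empty]
  have hF : ∀ a ∈ Icc (0:ℝ) 1, (ν (Iic (a + c))).toReal = a := by
    intro a ha
    rw [hν, Measure.map_apply hmc measurableSet_Iic]
    have hpre : (fun t : ℝ => t + c) ⁻¹' Iic (a + c) = Iic a := by
      ext t; simp
    rw [hpre, unif01, Measure.restrict_apply measurableSet_Iic]
    have hint : Iic a ∩ Icc 0 1 = Icc 0 a := by
      ext t
      simp only [mem_inter_iff, mem_Iic, mem_Icc]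
      constructor
      · rintro ⟨h1, h2, _⟩; exact ⟨h2, h1⟩
      · rintro ⟨h1, h2⟩; exact ⟨h2, h1, h2.trans ha.2⟩
    rw [hint, Real.volume_Icc]
    simp [ha.1]
  -- transfer from ν^n to unifPi via the shift
  set f : (Fin n → ℝ) → (Fin n → ℝ) := fun a i => a i + c with hf
  let e : (Fin n → ℝ) ≃ᵐ (Fin n → ℝ) :=
    { toFun := f
      invFun := fun a i => a i - c
      left_inv := fun a => funext fun i => by simp [hf]
      right_inv := fun a => funext fun i => by simp [hf]
      measurable_toFun := show Measurable (fun (a : Fin n → ℝ) (i : Fin n) => a i + c) from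
        measurable_pi_iff.mpr fun i => by fun_prop
      measurable_invFun := show Measurable (fun (a : Fin n → ℝ) (i : Fin n) => a i - c) from
        measurable_pi_iff.mpr fun i => by fun_prop }
  have hpres : MeasurePreserving f (Measure.pi fun _ : Fin n => unif01)
      (Measure.pi fun _ : Fin n => ν) :=
    measurePreserving_pi _ _ (fun _ => ⟨hmc, hν.symm⟩)
  set E : Set (Fin n → ℝ) :=
    {y : Fin n → ℝ | ∀ t : ℝ, stairstep b y ℓ t ≤ (ν (Set.Iic t)).toReal} with hE
  have htrans : (Measure.pi fun _ : Fin n => ν) E = unifPi n (f ⁻¹' E) := by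
    rw [← hpres.map_eq]
    exact e.measurableEmbedding.map_apply _ _
  -- the preimage of E inside the box is in the target event
  have hincl : (f ⁻¹' E) ∩ box ⊆ {u | bfun (Iic b) T x u ≤ T x} := by
    rintro u ⟨huE, hubox⟩
    have hu' : ∀ i, u i ∈ Icc (0:ℝ) 1 := fun i => hubox i (mem_univ i)
    refine fact1 u fun i => ?_
    have hsi : sortedVec u i ∈ Icc (0:ℝ) 1 := hu' (Tuple.sort u i)
    rcases lt_or_eq_of_le hsi.2 with h1 | h1
    · have ht : ¬ b ≤ sortedVec u i + c := by rw [hc]; push_neg; linarith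
      have hstep := huE (sortedVec u i + c)
      unfold stairstep at hstep
      rw [if_neg ht] at hstep
      have hmem : sortedVec ℓ i ∈ ({0} ∪ sortedVec ℓ ''
          {j | sortedVec (fun k => u k + c) j ≤ sortedVec u i + c} : Set ℝ) := by
        refine Or.inr ⟨i, ?_, rfl⟩
        simp only [mem_setOf_eq, sortedVec_add_const]
        exact le_refl _
      have hfin : (({0} ∪ sortedVec ℓ ''
          {j | sortedVec (fun k => u k + c) j ≤ sortedVec u i + c}) : Set ℝ).Finite :=
        (Set.finite_singleton 0).union ((Set.toFinite _).image _)
      have h2 : sortedVec ℓ i ≤ (ν (Iic (sortedVec u i + c))).toReal :=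
        (le_csSup hfin.bddAbove hmem).trans hstep
      rwa [hF _ hsi] at h2
    · rw [h1]
      exact (hℓ (Tuple.sort ℓ i)).2
  -- probability bound
  have step : ENNReal.ofReal (1 - α) ≤ unifPi n {u | bfun (Iic b) T x u ≤ T x} := by
    have hE0 := hlcb ν hνsupp
    refine le_trans hE0 ?_
    have h1 : (Measure.pi fun _ : Fin n => ν)
        {x | ∀ t : ℝ, stairstep b x ℓ t ≤ (ν (Set.Iic t)).toReal} = unifPi n (f ⁻¹' E) := htrans
    rw [h1]
    calc unifPi n (f ⁻¹' E)
        ≤ unifPi n (((f ⁻¹' E) ∩ box) ∪ boxᶜ) := by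
          apply measure_mono
          intro u hu
          by_cases h : u ∈ box
          · exact Or.inl ⟨hu, h⟩
          · exact Or.inr h
      _ ≤ unifPi n ((f ⁻¹' E) ∩ box) + unifPi n boxᶜ := measure_union_le _ _
      _ = unifPi n ((f ⁻¹' E) ∩ box) := by rw [hboxcompl, add_zero]
      _ ≤ unifPi n {u | bfun (Iic b) T x u ≤ T x} := measure_mono hincl
  -- conclude
  unfold ucb rquantile
  apply csInf_le
  · refine ⟨inducedMean b x (fun _ => (1:ℝ)), ?_⟩
    rintro y hy
    by_contra hlt
    push_neg at hlt
    have hsub : {u | bfun (Iic b) T x u ≤ y} ⊆ boxᶜ := by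
      intro u hu hub
      exact absurd (le_trans (fact2 u hub) hu) (not_le.mpr hlt)
    have hzero : unifPi n {u | bfun (Iic b) T x u ≤ y} = 0 :=
      le_antisymm ((measure_mono hsub).trans hboxcompl.le) zero_le
    have hy' : ENNReal.ofReal (1 - α) ≤ 0 := by
      rw [← hzero]; exact hy
    rw [le_zero_iff] at hy'
    exact (ENNReal.ofReal_pos.mpr (by linarith [hα.2])).ne' hy'
  · exact step
end

section
/- (Comparison with Anderson's bound.) Let b ∈ ℝ, D⁺ := (−∞, b], and D ⊆ D⁺ nonempty. Let α ∈ (0,1) and let ℓ ∈ [0,1]ⁿ be such that G_{X,ℓ} is an exact (1−α) lower confidence bound for the CDF on D⁺: for every Borel probability measure ν supported on D⁺ with CDF F and X i.i.d. of size n from ν, P( F(t) ≥ G_{X,ℓ}(t) for all t ) ≥ 1 − α, with equality attained for some such ν. Then for every sample x ∈ Dⁿ, using T(y) := m_{D⁺}(y,ℓ) (Anderson's bound b^{α,Anderson}_ℓ(x) = m_{D⁺}(x,ℓ)), one has b^α_{D⁺,T}(x) ≤ b^{α,Anderson}_ℓ(x). -/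
open MeasureTheory Set

namespace Aux11

lemma sortedVec_mono {n : ℕ} (x : Fin n → ℝ) : Monotone (sortedVec x) :=
  Tuple.monotone_sort x

lemma sortedVec_mem {n : ℕ} (x : Fin n → ℝ) (i : Fin n) : ∃ j, sortedVec x i = x j :=
  ⟨Tuple.sort x i, rfl⟩

lemma le_snoc_succ {n : ℕ} {z : Fin n → ℝ} {b : ℝ} (hz : ∀ i, z i ≤ b) (i : Fin n) :
    sortedVec z i ≤ (Fin.snoc (sortedVec z) b : Fin (n+1) → ℝ) i.succ := by
  by_cases h : (i : ℕ) + 1 < n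
  · have he : (i.succ : Fin (n+1)) = Fin.castSucc ⟨(i : ℕ) + 1, h⟩ := by
      ext; simp
    rw [he, Fin.snoc_castSucc]
    exact sortedVec_mono z (by simp [Fin.le_def])
  · have hn : (i : ℕ) + 1 = n := le_antisymm i.isLt (not_lt.1 h)
    have he : (i.succ : Fin (n+1)) = Fin.last n := by ext; simp [hn]
    rw [he, Fin.snoc_last]
    obtain ⟨j, hj⟩ := sortedVec_mem z i
    rw [hj]; exact hz j

lemma snoc_diff_nonneg {n : ℕ} {z : Fin n → ℝ} {b : ℝ} (hz : ∀ i, z i ≤ b) (i : Fin n) :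
    0 ≤ (Fin.snoc (sortedVec z) b : Fin (n+1) → ℝ) i.succ - sortedVec z i :=
  sub_nonneg.2 (le_snoc_succ hz i)

lemma inducedMean_mono_weights {n : ℕ} {b : ℝ} {z : Fin n → ℝ} (hz : ∀ i, z i ≤ b)
    {u v : Fin n → ℝ} (h : ∀ i, sortedVec u i ≤ sortedVec v i) :
    inducedMean b z v ≤ inducedMean b z u := by
  unfold inducedMean
  apply sub_le_sub_left
  exact Finset.sum_le_sum fun i _ => mul_le_mul_of_nonneg_right (h i) (snoc_diff_nonneg hz i)

lemma sortedVec_nonneg {n : ℕ} {u : Fin n → ℝ} (hu : ∀ i, 0 ≤ u i) (i : Fin n) :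
    0 ≤ sortedVec u i := by
  obtain ⟨j, hj⟩ := sortedVec_mem u i; rw [hj]; exact hu j

lemma inducedMean_le_top {n : ℕ} {b : ℝ} {z u : Fin n → ℝ} (hz : ∀ i, z i ≤ b)
    (hu : ∀ i, 0 ≤ u i) : inducedMean b z u ≤ b :=
  sub_le_self _ (Finset.sum_nonneg fun i _ =>
    mul_nonneg (sortedVec_nonneg hu i) (snoc_diff_nonneg hz i))

lemma bfun_le_of_dom {n : ℕ} {b : ℝ} {ℓ x u : Fin n → ℝ}
    (hx : ∀ i, x i ≤ b) (h : ∀ i, sortedVec ℓ i ≤ sortedVec u i) :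
    bfun (Iic b) (fun y => inducedMean b y ℓ) x u ≤ inducedMean b x ℓ := by
  unfold bfun
  rw [csSup_Iic]
  refine csSup_le ⟨inducedMean b x u, ⟨x, ⟨fun i => hx i, le_rfl⟩, rfl⟩⟩ ?_
  rintro v ⟨z, ⟨hzD, hzT⟩, rfl⟩
  exact (inducedMean_mono_weights (fun i => hzD i) h).trans hzT

lemma le_bfun {n : ℕ} {b : ℝ} (T : (Fin n → ℝ) → ℝ) {x u : Fin n → ℝ}
    (hx : ∀ i, x i ≤ b) (hu : ∀ i, 0 ≤ u i) :
    inducedMean b x u ≤ bfun (Iic b) T x u := by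
  unfold bfun
  rw [csSup_Iic]
  apply le_csSup
  · refine ⟨b, ?_⟩
    rintro v ⟨z, ⟨hzD, _⟩, rfl⟩
    exact inducedMean_le_top (fun i => hzD i) hu
  · exact ⟨x, ⟨fun i => hx i, le_rfl⟩, rfl⟩

lemma sortedVec_const_add {n : ℕ} (c : ℝ) (u : Fin n → ℝ) (i : Fin n) :
    sortedVec (fun j => c + u j) i = c + sortedVec u i := by
  have h : (fun j => c + u j) ∘ ⇑(Tuple.sort u)
      = (fun j => c + u j) ∘ ⇑(Tuple.sort (fun j => c + u j)) := by
    rw [Tuple.comp_sort_eq_comp_iff_monotone]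
    intro a b hab
    exact (add_le_add_iff_left c).2 (Tuple.monotone_sort u hab)
  show ((fun j => c + u j) ∘ ⇑(Tuple.sort (fun j => c + u j))) i = _
  rw [← h]; rfl

lemma sortedVec_one {n : ℕ} (i : Fin n) : sortedVec (fun _ => (1:ℝ)) i = 1 := rfl



instance : IsProbabilityMeasure unif01 :=
  ⟨by simp [unif01, Real.volume_Icc]⟩

instance (n : ℕ) : IsProbabilityMeasure (unifPi n) := by
  unfold unifPi; infer_instance

lemma unif01_Iic {c : ℝ} (h0 : 0 ≤ c) (h1 : c ≤ 1) : unif01 (Iic c) = ENNReal.ofReal c := by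
  rw [unif01, Measure.restrict_apply measurableSet_Iic]
  have : Iic c ∩ Icc 0 1 = Icc 0 c := by
    ext t; simp only [mem_inter_iff, mem_Iic, mem_Icc]
    constructor
    · rintro ⟨h, h', _⟩; exact ⟨h', h⟩
    · rintro ⟨h', h⟩; exact ⟨h, h', h.trans h1⟩
  rw [this, Real.volume_Icc, sub_zero]

lemma nu_map_Iic (c0 t : ℝ) :
    (Measure.map (fun s => c0 + s) unif01) (Iic t) = unif01 (Iic (t - c0)) := by
  rw [Measure.map_apply (measurable_const_add c0) measurableSet_Iic]
  congr 1
  ext s; simp only [mem_preimage, mem_Iic]; constructor <;> intro <;> linarith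

lemma map_pi_eq {n : ℕ} (c0 : ℝ) :
    Measure.pi (fun _ : Fin n => Measure.map (fun t => c0 + t) unif01)
      = Measure.map (fun u : Fin n → ℝ => fun i => c0 + u i) (unifPi n) := by
  haveI : IsProbabilityMeasure (Measure.map (fun t => c0 + t) unif01) :=
    Measure.isProbabilityMeasure_map (measurable_const_add c0).aemeasurable
  have hf : Measurable (fun u : Fin n → ℝ => fun i => c0 + u i) :=
    measurable_pi_lambda _ fun i => (measurable_const_add c0).comp (measurable_pi_apply i)
  refine Measure.pi_eq fun s hs => ?_
  rw [Measure.map_apply hf (MeasurableSet.univ_pi fun i => hs i)]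
  have hpre : (fun u : Fin n → ℝ => fun i => c0 + u i) ⁻¹' (Set.univ.pi s)
      = Set.univ.pi (fun i => (fun t => c0 + t) ⁻¹' s i) := by
    ext u; simp [Set.mem_pi]
  rw [hpre, unifPi, Measure.pi_pi]
  exact Finset.prod_congr rfl fun i _ =>
    (Measure.map_apply (measurable_const_add c0) (hs i)).symm

lemma shift_embedding {n : ℕ} (c0 : ℝ) :
    MeasurableEmbedding (fun u : Fin n → ℝ => fun i => c0 + u i) := by
  have : (fun u : Fin n → ℝ => fun i => c0 + u i)
      = ⇑(Homeomorph.addLeft ((fun _ => c0) : Fin n → ℝ)) := rfl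
  rw [this]
  exact (Homeomorph.addLeft _).measurableEmbedding

lemma box_compl_null {n : ℕ} :
    unifPi n (Set.univ.pi fun _ : Fin n => Icc (0:ℝ) 1)ᶜ = 0 := by
  have hm : MeasurableSet (Set.univ.pi fun _ : Fin n => Icc (0:ℝ) 1) :=
    MeasurableSet.univ_pi fun _ => measurableSet_Icc
  rw [measure_compl hm (measure_ne_top _ _)]
  have : unifPi n (Set.univ.pi fun _ : Fin n => Icc (0:ℝ) 1) = 1 := by
    rw [unifPi, Measure.pi_pi]
    simp [unif01, Real.volume_Icc]
  rw [this]
  simp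

end Aux11

/-- Comparison with Anderson's bound: if `G_{X,ℓ}` is an exact
`(1-α)` lower confidence bound for the CDF on `D⁺ = (-∞, b]`, then for every
sample `x ∈ Dⁿ` (`D ⊆ D⁺`), using `T(y) = m_{D⁺}(y, ℓ)`, our bound is at most
Anderson's bound `b^{α,Anderson}_ℓ(x) = m_{D⁺}(x, ℓ)`. -/
theorem stmt11 {n : ℕ} (b : ℝ) (D : Set ℝ) (hD : D.Nonempty) (hsub : D ⊆ Set.Iic b)
    (ℓ : Fin n → ℝ) (hℓ : ∀ i, ℓ i ∈ Set.Icc (0:ℝ) 1)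
    (α : ℝ) (hα : α ∈ Set.Ioo (0:ℝ) 1)
    (hlcb : ∀ (ν : Measure ℝ) [IsProbabilityMeasure ν], (∀ᵐ t ∂ν, t ≤ b) →
      ENNReal.ofReal (1 - α)
        ≤ (Measure.pi fun _ : Fin n => ν)
            {x | ∀ t : ℝ, stairstep b x ℓ t ≤ (ν (Set.Iic t)).toReal})
    (hexact : ∃ (ν : Measure ℝ) (_ : IsProbabilityMeasure ν), (∀ᵐ t ∂ν, t ≤ b) ∧
      (Measure.pi fun _ : Fin n => ν)
          {x | ∀ t : ℝ, stairstep b x ℓ t ≤ (ν (Set.Iic t)).toReal}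
        = ENNReal.ofReal (1 - α)) :
    ∀ x : Fin n → ℝ, (∀ i, x i ∈ D) →
      ucb (Set.Iic b) (fun y => inducedMean b y ℓ) α x ≤ inducedMean b x ℓ := by
  intro x hxD
  have hx : ∀ i, x i ≤ b := fun i => hsub (hxD i)
  have hα1 : (0:ℝ) < 1 - α := by linarith [hα.2]
  set c0 : ℝ := b - 1 with hc0
  haveI : IsProbabilityMeasure (Measure.map (fun s => c0 + s) unif01) :=
    Measure.isProbabilityMeasure_map (measurable_const_add c0).aemeasurable
  have hae : ∀ᵐ t ∂(Measure.map (fun s => c0 + s) unif01), t ≤ b := by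
    rw [ae_iff]
    have h1 : {t : ℝ | ¬ t ≤ b} = Ioi b := by ext t; simp
    rw [h1, Measure.map_apply (measurable_const_add c0) measurableSet_Ioi]
    have h2 : (fun s => c0 + s) ⁻¹' Ioi b = Ioi 1 := by
      ext s; simp only [mem_preimage, mem_Ioi, hc0]; constructor <;> intro <;> linarith
    rw [h2, unif01, Measure.restrict_apply measurableSet_Ioi]
    have h3 : Ioi (1:ℝ) ∩ Icc 0 1 = ∅ := by
      ext s; simp only [mem_inter_iff, mem_Ioi, mem_Icc, mem_empty_iff_false, iff_false,
        not_and]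
      intro h4 h5 h6; linarith
    simp [h3]
  have hcov := hlcb (Measure.map (fun s => c0 + s) unif01) hae
  rw [Aux11.map_pi_eq c0, MeasurableEmbedding.map_apply (Aux11.shift_embedding c0)] at hcov
  set box : Set (Fin n → ℝ) := Set.univ.pi fun _ : Fin n => Icc (0:ℝ) 1 with hboxdef
  set A : Set (Fin n → ℝ) :=
    {u | bfun (Iic b) (fun y => inducedMean b y ℓ) x u ≤ inducedMean b x ℓ} with hAdef
  have hkey : (fun u : Fin n → ℝ => fun i => c0 + u i) ⁻¹'
      {xx | ∀ t : ℝ, stairstep b xx ℓ t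
        ≤ ((Measure.map (fun s => c0 + s) unif01) (Set.Iic t)).toReal} ∩ box ⊆ A := by
    rintro u ⟨hu1, hu2⟩
    have hubox : ∀ i, u i ∈ Icc (0:ℝ) 1 := fun i => hu2 i (mem_univ i)
    have hdom : ∀ i, sortedVec ℓ i ≤ sortedVec u i := by
      intro i
      obtain ⟨j, hj⟩ := Aux11.sortedVec_mem u i
      have hc0le : 0 ≤ sortedVec u i := hj ▸ (hubox j).1
      have hc1 : sortedVec u i ≤ 1 := hj ▸ (hubox j).2
      obtain ⟨k, hk⟩ := Aux11.sortedVec_mem ℓ i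
      have hℓ1 : sortedVec ℓ i ≤ 1 := hk ▸ (hℓ k).2
      have hcovt := hu1 (c0 + sortedVec u i)
      have hrhs : ((Measure.map (fun s => c0 + s) unif01)
          (Set.Iic (c0 + sortedVec u i))).toReal = sortedVec u i := by
        rw [Aux11.nu_map_Iic]
        have he : c0 + sortedVec u i - c0 = sortedVec u i := by ring
        rw [he, Aux11.unif01_Iic hc0le hc1, ENNReal.toReal_ofReal hc0le]
      rw [hrhs] at hcovt
      by_cases hbt : b ≤ c0 + sortedVec u i
      · simp only [stairstep, if_pos hbt] at hcovt
        linarith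
      · simp only [stairstep, if_neg hbt] at hcovt
        refine le_trans (le_csSup ?_ ?_) hcovt
        · refine ⟨1, ?_⟩
          intro v hv
          rcases hv with hv | ⟨m, _, rfl⟩
          · rw [mem_singleton_iff] at hv; rw [hv]; exact zero_le_one
          · obtain ⟨k', hk'⟩ := Aux11.sortedVec_mem ℓ m
            rw [hk']; exact (hℓ k').2
        · refine Or.inr ⟨i, ?_, rfl⟩
          show sortedVec (fun i => c0 + u i) i ≤ c0 + sortedVec u i
          rw [Aux11.sortedVec_const_add c0 u i]
    exact Aux11.bfun_le_of_dom hx hdom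
  have h1 : ENNReal.ofReal (1 - α) ≤ unifPi n A := by
    refine hcov.trans ?_
    calc unifPi n _
        ≤ unifPi n (_ ∩ box) + unifPi n (_ \ box) :=
          measure_le_inter_add_diff (unifPi n) _ box
      _ ≤ unifPi n A + 0 := by
          refine add_le_add (measure_mono hkey) ?_
          rw [measure_mono_null (fun a ha => ha.2) Aux11.box_compl_null]
      _ = unifPi n A := add_zero _
  show rquantile (unifPi n) (bfun (Set.Iic b) (fun y => inducedMean b y ℓ) x) (1 - α)
      ≤ inducedMean b x ℓ
  unfold rquantile
  refine csInf_le ⟨inducedMean b x (fun _ => (1:ℝ)), ?_⟩ h1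
  intro y hy
  by_contra hlt
  push_neg at hlt
  have hsubc : {ω | bfun (Set.Iic b) (fun y => inducedMean b y ℓ) x ω ≤ y} ⊆ boxᶜ := by
    intro u hu hub
    have h0 : ∀ i, 0 ≤ u i := fun i => (hub i (mem_univ i)).1
    have h1' : ∀ i, sortedVec u i ≤ sortedVec (fun _ => (1:ℝ)) i := by
      intro i; rw [Aux11.sortedVec_one]
      obtain ⟨j, hj⟩ := Aux11.sortedVec_mem u i
      rw [hj]; exact (hub j (mem_univ j)).2
    have hge := (Aux11.inducedMean_mono_weights hx h1').trans
      (Aux11.le_bfun (fun y => inducedMean b y ℓ) hx h0)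
    exact absurd (hge.trans hu) (not_le.2 hlt)
  have hz : unifPi n {ω | bfun (Set.Iic b) (fun y => inducedMean b y ℓ) x ω ≤ y} = 0 :=
    measure_mono_null hsubc Aux11.box_compl_null
  rw [Set.mem_setOf_eq, hz] at hy
  simp only [nonpos_iff_eq_zero, ENNReal.ofReal_eq_zero] at hy
  linarith
end

section
/- Let D ⊆ ℝ be nonempty with finite supremum s_D, T : ℝⁿ → ℝ, x ∈ Dⁿ, and φ := sup_{z ∈ S_{D,T}(x)} z_{(1)}, and suppose φ < s_D. Let U = (U_1,…,U_n) be i.i.d. Uniform(0,1) and M := b_{D,T}(x,U) with CDF F_M. Then for all c₁, c₂ with φ ≤ c₁ < c₂ ≤ s_D: F_M(c₂) − F_M(c₁) ≥ ( (c₂ − c₁)/(s_D − φ) )ⁿ > 0; in particular F_M is strictly increasing on [φ, s_D]. -/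
open MeasureTheory Set

lemma stmt15_telescope {n : ℕ} (hn : 0 < n) (s : ℝ) (z : Fin n → ℝ) :
    ∑ i : Fin n, ((Fin.snoc (sortedVec z) s : Fin (n+1) → ℝ) i.succ - sortedVec z i)
      = s - sortedVec z ⟨0, hn⟩ := by
  set g : Fin (n+1) → ℝ := Fin.snoc (sortedVec z) s with hg
  set f : ℕ → ℝ := fun k => g ⟨min k n, Nat.lt_succ_of_le (min_le_right _ _)⟩ with hf
  have h1 : ∑ i : Fin n, (g i.succ - g i.castSucc) = ∑ i : Fin n, (f (i.val + 1) - f i.val) := by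
    apply Finset.sum_congr rfl
    intro i _
    have e1 : f (i.val + 1) = g i.succ := by
      simp only [hf]; congr 1; exact Fin.ext (by simp [Nat.min_eq_left i.isLt])
    have e2 : f i.val = g i.castSucc := by
      simp only [hf]; congr 1; exact Fin.ext (by simp [Nat.min_eq_left (le_of_lt i.isLt)])
    rw [e1, e2]
  calc ∑ i : Fin n, (g i.succ - sortedVec z i)
      = ∑ i : Fin n, (g i.succ - g i.castSucc) := by
        apply Finset.sum_congr rfl; intro i _; rw [hg, Fin.snoc_castSucc]
    _ = ∑ i : Fin n, (f (i.val+1) - f i.val) := h1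
    _ = ∑ i ∈ Finset.range n, (f (i+1) - f i) := Fin.sum_univ_eq_sum_range (fun i => f (i+1) - f i) n
    _ = f n - f 0 := Finset.sum_range_sub f n
    _ = s - sortedVec z ⟨0, hn⟩ := by
        have hfn : f n = s := by
          simp only [hf]
          have : (⟨min n n, Nat.lt_succ_of_le (min_le_right n n)⟩ : Fin (n+1)) = Fin.last n :=
            Fin.ext (by simp)
          rw [this, hg, Fin.snoc_last]
        rw [hfn]
        congr 1
        have : (⟨min 0 n, Nat.lt_succ_of_le (min_le_right 0 n)⟩ : Fin (n+1))
            = Fin.castSucc ⟨0, hn⟩ := Fin.ext (by simp)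
        simp only [hf, this, hg, Fin.snoc_castSucc]

lemma stmt15_gap_nonneg {n : ℕ} {s : ℝ} {z : Fin n → ℝ} (hz : ∀ i, z i ≤ s) (i : Fin n) :
    sortedVec z i ≤ (Fin.snoc (sortedVec z) s : Fin (n+1) → ℝ) i.succ := by
  by_cases h : i.val + 1 < n
  · have : i.succ = Fin.castSucc ⟨i.val + 1, h⟩ := Fin.ext (by simp)
    rw [this, Fin.snoc_castSucc]
    exact Tuple.monotone_sort z (by simp [Fin.le_def])
  · have hv : i.val + 1 = n := by omega
    have : i.succ = Fin.last n := Fin.ext (by simp [hv])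
    rw [this, Fin.snoc_last]
    exact hz _

/-- if `φ = sup_{z ∈ S_{D,T}(x)} z_{(1)} < sup D`, then the CDF
`F_M` of `M = b_{D,T}(x, U)` (over `U` i.i.d. Uniform(0,1)) satisfies, for all
`φ ≤ c₁ < c₂ ≤ sup D`, `F_M(c₂) - F_M(c₁) ≥ ((c₂-c₁)/(sup D - φ))ⁿ > 0`. -/
theorem stmt15 {n : ℕ} (hn : 0 < n) (D : Set ℝ) (hD : D.Nonempty) (hbdd : BddAbove D)
    (T : (Fin n → ℝ) → ℝ) (x : Fin n → ℝ) (hx : ∀ i, x i ∈ D)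
    (φ : ℝ) (hφdef : φ = sSup ((fun z => sortedVec z ⟨0, hn⟩) '' SsetD D T x))
    (hφ : φ < sSup D) :
    ∀ c₁ c₂ : ℝ, φ ≤ c₁ → c₁ < c₂ → c₂ ≤ sSup D →
      ((c₂ - c₁) / (sSup D - φ)) ^ n
          ≤ (unifPi n {u | bfun D T x u ≤ c₂}).toReal
            - (unifPi n {u | bfun D T x u ≤ c₁}).toReal ∧
      0 < ((c₂ - c₁) / (sSup D - φ)) ^ n := by
  intro c₁ c₂ hc₁ hlt hc₂
  haveI : Nonempty (Fin n) := ⟨⟨0, hn⟩⟩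
  set s := sSup D with hs
  have hsφ : 0 < s - φ := sub_pos.mpr hφ
  set t₁ : ℝ := (s - c₁) / (s - φ) with ht₁
  set t₂ : ℝ := (s - c₂) / (s - φ) with ht₂
  have ht₂0 : 0 ≤ t₂ := div_nonneg (by linarith) hsφ.le
  have ht₁1 : t₁ ≤ 1 := by rw [div_le_one hsφ]; linarith
  have htlt : t₂ < t₁ := by
    rw [ht₁, ht₂, div_lt_div_iff₀ hsφ hsφ]; nlinarith
  have ht₁pos : 0 < t₁ := lt_of_le_of_lt ht₂0 htlt
  have hdiff : t₁ - t₂ = (c₂ - c₁) / (s - φ) := by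
    rw [ht₁, ht₂, div_sub_div_same]; ring_nf
  have ht₂val : t₂ * (s - φ) = s - c₂ := div_mul_cancel₀ _ (ne_of_gt hsφ)
  have ht₁val : t₁ * (s - φ) = s - c₁ := div_mul_cancel₀ _ (ne_of_gt hsφ)
  -- basic facts about S
  have hxS : x ∈ SsetD D T x := ⟨hx, le_refl _⟩
  have hSne : (SsetD D T x).Nonempty := ⟨x, hxS⟩
  have himg_ne : ((fun z => sortedVec z ⟨0, hn⟩) '' SsetD D T x).Nonempty := hSne.image _
  have himg_bdd : BddAbove ((fun z => sortedVec z ⟨0, hn⟩) '' SsetD D T x) := by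
    refine ⟨s, ?_⟩
    rintro _ ⟨z, hz, rfl⟩
    exact le_csSup hbdd (hz.1 _)
  have hz1_le : ∀ z ∈ SsetD D T x, sortedVec z ⟨0, hn⟩ ≤ φ := by
    intro z hz
    rw [hφdef]
    exact le_csSup himg_bdd ⟨z, hz, rfl⟩
  have hzle : ∀ z ∈ SsetD D T x, ∀ i, z i ≤ s := fun z hz i => le_csSup hbdd (hz.1 i)
  -- the box E
  set E : Set (Fin n → ℝ) := Set.univ.pi (fun _ : Fin n => Ico t₂ t₁) with hE
  have hmemE : ∀ u, u ∈ E ↔ ∀ i, t₂ ≤ u i ∧ u i < t₁ := by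
    intro u; simp [hE, Set.mem_univ_pi, Set.mem_Ico]
  -- (a) for u ∈ E, every inducedMean s z u ≤ c₂, and all are ≤ s
  have hmean_le : ∀ u, (∀ i, t₂ ≤ u i ∧ u i < t₁) → ∀ z ∈ SsetD D T x,
      inducedMean s z u ≤ c₂ := by
    intro u hu z hz
    have hgap := stmt15_gap_nonneg (hzle z hz)
    have hterm : ∀ i : Fin n, t₂ * ((Fin.snoc (sortedVec z) s : Fin (n+1) → ℝ) i.succ - sortedVec z i)
        ≤ sortedVec u i * ((Fin.snoc (sortedVec z) s : Fin (n+1) → ℝ) i.succ - sortedVec z i) := by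
      intro i
      have h1 : t₂ ≤ sortedVec u i := (hu (Tuple.sort u i)).1
      exact mul_le_mul_of_nonneg_right h1 (by linarith [hgap i])
    have hsum : t₂ * (s - sortedVec z ⟨0, hn⟩)
        ≤ ∑ i : Fin n, sortedVec u i * ((Fin.snoc (sortedVec z) s : Fin (n+1) → ℝ) i.succ - sortedVec z i) := by
      calc t₂ * (s - sortedVec z ⟨0, hn⟩)
          = ∑ i : Fin n, t₂ * ((Fin.snoc (sortedVec z) s : Fin (n+1) → ℝ) i.succ - sortedVec z i) := by
            rw [← Finset.mul_sum, stmt15_telescope hn]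
        _ ≤ _ := Finset.sum_le_sum (fun i _ => hterm i)
    have hz1 : sortedVec z ⟨0, hn⟩ ≤ φ := hz1_le z hz
    have : t₂ * (s - φ) ≤ t₂ * (s - sortedVec z ⟨0, hn⟩) :=
      mul_le_mul_of_nonneg_left (by linarith) ht₂0
    unfold inducedMean
    rw [ht₂val] at this
    linarith
  have hmean_le_s : ∀ u, (∀ i, t₂ ≤ u i ∧ u i < t₁) → ∀ z ∈ SsetD D T x,
      inducedMean s z u ≤ s := by
    intro u hu z hz
    have hgap := stmt15_gap_nonneg (hzle z hz)
    have hsum : (0:ℝ) ≤ ∑ i : Fin n, sortedVec u i * ((Fin.snoc (sortedVec z) s : Fin (n+1) → ℝ) i.succ - sortedVec z i) := by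
      apply Finset.sum_nonneg
      intro i _
      exact mul_nonneg (le_trans ht₂0 ((hu (Tuple.sort u i)).1)) (by linarith [hgap i])
    unfold inducedMean
    linarith
  -- (b) for u ∈ E, bfun > c₁
  have hb_gt : ∀ u, (∀ i, t₂ ≤ u i ∧ u i < t₁) → c₁ < bfun D T x u := by
    intro u hu
    set M : ℝ := Finset.univ.sup' Finset.univ_nonempty u with hM
    have hMlt : M < t₁ := by
      obtain ⟨j, -, hj⟩ := Finset.exists_mem_eq_sup' Finset.univ_nonempty u
      rw [hM, hj]; exact (hu j).2
    have hM0 : 0 ≤ M := le_trans (le_trans ht₂0 (hu ⟨0, hn⟩).1) (Finset.le_sup' u (Finset.mem_univ _))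
    set ε : ℝ := (t₁ - M) * (s - φ) / (2 * t₁) with hε
    have hεpos : 0 < ε := div_pos (mul_pos (by linarith) hsφ) (by linarith)
    obtain ⟨y, ⟨z, hz, rfl⟩, hy⟩ := exists_lt_of_lt_csSup himg_ne
      (show φ - ε < sSup _ by rw [← hφdef]; linarith)
    have hgap := stmt15_gap_nonneg (hzle z hz)
    set z1 := sortedVec z ⟨0, hn⟩ with hz1def
    have hz1φ : z1 ≤ φ := hz1_le z hz
    -- lower bound on inducedMean
    have hterm : ∀ i : Fin n, sortedVec u i * ((Fin.snoc (sortedVec z) s : Fin (n+1) → ℝ) i.succ - sortedVec z i)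
        ≤ M * ((Fin.snoc (sortedVec z) s : Fin (n+1) → ℝ) i.succ - sortedVec z i) := by
      intro i
      exact mul_le_mul_of_nonneg_right (Finset.le_sup' u (Finset.mem_univ _)) (by linarith [hgap i])
    have hsum : ∑ i : Fin n, sortedVec u i * ((Fin.snoc (sortedVec z) s : Fin (n+1) → ℝ) i.succ - sortedVec z i)
        ≤ M * (s - z1) := by
      calc _ ≤ ∑ i : Fin n, M * ((Fin.snoc (sortedVec z) s : Fin (n+1) → ℝ) i.succ - sortedVec z i) :=
            Finset.sum_le_sum (fun i _ => hterm i)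
        _ = M * (s - z1) := by rw [← Finset.mul_sum, stmt15_telescope hn]
    have hkey : M * (s - z1) < t₁ * (s - φ) := by
      have hεeq : ε * (2 * t₁) = (t₁ - M) * (s - φ) :=
        div_mul_cancel₀ _ (by positivity)
      nlinarith [mul_le_mul_of_nonneg_left (show s - z1 ≤ s - φ + ε by linarith) hM0,
        mul_pos (show (0:ℝ) < t₁ - M by linarith) hsφ, mul_nonneg hM0 hεpos.le]
    have hmean : c₁ < inducedMean s z u := by
      unfold inducedMean
      rw [ht₁val] at hkey
      linarith
    have hble : inducedMean s z u ≤ bfun D T x u := by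
      apply le_csSup
      · exact ⟨s, by rintro _ ⟨z', hz', rfl⟩; exact hmean_le_s u hu z' hz'⟩
      · exact ⟨z, hz, rfl⟩
    linarith
  -- measure computations
  haveI hP01 : IsProbabilityMeasure unif01 := ⟨by
    rw [unif01, Measure.restrict_apply_univ, Real.volume_Icc]; simp⟩
  haveI : IsProbabilityMeasure (unifPi n) := by
    rw [unifPi]; infer_instance
  have hEmeas : MeasurableSet E := MeasurableSet.univ_pi (fun _ => measurableSet_Ico)
  have hμE : unifPi n E = ENNReal.ofReal (t₁ - t₂) ^ n := by
    rw [hE, unifPi, Measure.pi_pi]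
    have h1 : unif01 (Ico t₂ t₁) = ENNReal.ofReal (t₁ - t₂) := by
      rw [unif01, Measure.restrict_apply measurableSet_Ico]
      have : Ico t₂ t₁ ∩ Icc (0:ℝ) 1 = Ico t₂ t₁ := by
        apply inter_eq_left.mpr
        intro y hy
        exact ⟨le_trans ht₂0 hy.1, le_trans (le_of_lt hy.2) ht₁1⟩
      rw [this, Real.volume_Ico]
    simp [h1]
  set A₁ : Set (Fin n → ℝ) := {u | bfun D T x u ≤ c₁} with hA₁
  set A₂ : Set (Fin n → ℝ) := {u | bfun D T x u ≤ c₂} with hA₂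
  have hA₁₂ : A₁ ⊆ A₂ := fun u hu => le_trans hu hlt.le
  have hEA₂ : E ⊆ A₂ := by
    intro u hu
    have hu' := (hmemE u).mp hu
    show bfun D T x u ≤ c₂
    rw [bfun, ← hs]
    exact csSup_le (hSne.image _) (by rintro _ ⟨z, hz, rfl⟩; exact hmean_le u hu' z hz)
  have hdisj : Disjoint A₁ E := by
    rw [Set.disjoint_left]
    intro u hu1 huE
    exact absurd hu1 (not_le.mpr (hb_gt u ((hmemE u).mp huE)))
  have hunion : unifPi n A₁ + unifPi n E ≤ unifPi n A₂ := by
    rw [← measure_union hdisj hEmeas]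
    exact measure_mono (union_subset hA₁₂ hEA₂)
  have hfin1 : unifPi n A₁ ≠ ⊤ := measure_ne_top _ _
  have hfin2 : unifPi n A₂ ≠ ⊤ := measure_ne_top _ _
  have hfinE : unifPi n E ≠ ⊤ := measure_ne_top _ _
  have hreal : (unifPi n A₁).toReal + (unifPi n E).toReal ≤ (unifPi n A₂).toReal := by
    rw [← ENNReal.toReal_add hfin1 hfinE]
    exact ENNReal.toReal_le_toReal (ENNReal.add_ne_top.mpr ⟨hfin1, hfinE⟩) hfin2 |>.mpr hunion
  have hEreal : (unifPi n E).toReal = (t₁ - t₂) ^ n := by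
    rw [hμE, ENNReal.toReal_pow, ENNReal.toReal_ofReal (by linarith)]
  constructor
  · rw [← hdiff]
    linarith
  · exact pow_pos (div_pos (by linarith) hsφ) n
end

section
/- Let D ⊆ ℝ be nonempty with finite supremum s_D, T : ℝⁿ → ℝ, x ∈ Dⁿ, α ∈ (0,1), and φ := sup_{z ∈ S_{D,T}(x)} z_{(1)} with φ < s_D. Let ε > 0 and set γ := min( α, ( ε/(3(s_D − φ)) )ⁿ ). Then the quantiles of M := b_{D,T}(x,U) satisfy Q(1 − α + γ, M) ≤ Q(1 − α, M) + ε/3. -/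
open MeasureTheory Set

lemma telescope {n : ℕ} (g : Fin (n+1) → ℝ) :
    ∑ i : Fin n, (g i.succ - g i.castSucc) = g (Fin.last n) - g 0 := by
  induction n with
  | zero => simp
  | succ m ih =>
    rw [Fin.sum_univ_castSucc]
    have h := ih (g ∘ Fin.castSucc)
    simp only [Function.comp_apply, Fin.succ_castSucc] at h ⊢
    rw [h, Fin.succ_last]
    have h0 : (Fin.castSucc (0 : Fin (m+1))) = (0 : Fin (m+2)) := rfl
    rw [h0]
    ring

lemma inducedMean_bounds {n : ℕ} (hn : 0 < n) {D : Set ℝ} (hbdd : BddAbove D)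
    {z : Fin n → ℝ} (hz : ∀ i, z i ∈ D) (u : Fin n → ℝ) {lo hi : ℝ}
    (hlo : ∀ i, lo ≤ u i) (hhi : ∀ i, u i ≤ hi) :
    sSup D - hi * (sSup D - sortedVec z ⟨0, hn⟩) ≤ inducedMean (sSup D) z u ∧
    inducedMean (sSup D) z u ≤ sSup D - lo * (sSup D - sortedVec z ⟨0, hn⟩) := by
  set s := sSup D with hs
  set g : Fin (n+1) → ℝ := Fin.snoc (sortedVec z) s with hg
  have hzle : ∀ i, sortedVec z i ≤ s := fun i => le_csSup hbdd (hz _)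
  have hmono : Monotone (sortedVec z) := Tuple.monotone_sort z
  have hgap : ∀ i : Fin n, sortedVec z i ≤ g i.succ := by
    intro i
    by_cases h : (i : ℕ) + 1 < n
    · have he : i.succ = Fin.castSucc ⟨(i:ℕ)+1, h⟩ := by
        apply Fin.ext; simp
      rw [he, hg, Fin.snoc_castSucc]
      exact hmono (by simp [Fin.le_def])
    · have hin : (i:ℕ) + 1 = n := by omega
      have he : i.succ = Fin.last n := by apply Fin.ext; simp [hin]
      rw [he, hg, Fin.snoc_last]
      exact hzle i
  have hcast : ∀ i : Fin n, sortedVec z i = g i.castSucc := by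
    intro i; rw [hg, Fin.snoc_castSucc]
  have hsum : ∑ i : Fin n, (g i.succ - g i.castSucc) = s - sortedVec z ⟨0, hn⟩ := by
    rw [telescope]
    have h1 : g (Fin.last n) = s := Fin.snoc_last ..
    have h2 : g 0 = sortedVec z ⟨0, hn⟩ := by
      have h0 : (0 : Fin (n+1)) = Fin.castSucc ⟨0, hn⟩ := rfl
      rw [h0, hg, Fin.snoc_castSucc]
    rw [h1, h2]
  have hgap0 : ∀ i : Fin n, 0 ≤ g i.succ - g i.castSucc := by
    intro i; rw [← hcast]; linarith [hgap i]
  have key : inducedMean s z u = s - ∑ i : Fin n, sortedVec u i * (g i.succ - g i.castSucc) := by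
    unfold inducedMean
    congr 1
    refine Finset.sum_congr rfl fun i _ => ?_
    rw [← hcast]
  constructor
  · rw [key]
    have h := Finset.sum_le_sum (s := Finset.univ)
      (fun i _ => mul_le_mul_of_nonneg_right (show sortedVec u i ≤ hi from hhi _) (hgap0 i))
    rw [← Finset.mul_sum, hsum] at h
    linarith
  · rw [key]
    have h := Finset.sum_le_sum (s := Finset.univ)
      (fun i _ => mul_le_mul_of_nonneg_right (show lo ≤ sortedVec u i from hlo _) (hgap0 i))
    rw [← Finset.mul_sum, hsum] at h
    linarith

/-- with `φ = sup_{z ∈ S_{D,T}(x)} z_{(1)} < sup D`, `ε > 0` and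
`γ = min(α, (ε/(3(sup D - φ)))ⁿ)`, the quantiles of `M = b_{D,T}(x, U)` satisfy
`Q(1 - α + γ, M) ≤ Q(1 - α, M) + ε/3`. -/
theorem stmt16 {n : ℕ} (hn : 0 < n) (D : Set ℝ) (hD : D.Nonempty) (hbdd : BddAbove D)
    (T : (Fin n → ℝ) → ℝ) (x : Fin n → ℝ) (hx : ∀ i, x i ∈ D)
    (α : ℝ) (hα : α ∈ Set.Ioo (0:ℝ) 1)
    (φ : ℝ) (hφdef : φ = sSup ((fun z => sortedVec z ⟨0, hn⟩) '' SsetD D T x))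
    (hφ : φ < sSup D) (ε : ℝ) (hε : 0 < ε) :
    rquantile (unifPi n) (bfun D T x)
        (1 - α + min α ((ε / (3 * (sSup D - φ))) ^ n))
      ≤ rquantile (unifPi n) (bfun D T x) (1 - α) + ε / 3 := by
  haveI : Nonempty (Fin n) := ⟨⟨0, hn⟩⟩
  haveI : SigmaFinite unif01 := show SigmaFinite (volume.restrict (Icc (0:ℝ) 1)) from inferInstance
  set μ := unifPi n with hμdef
  set M := bfun D T x with hMdef
  set s := sSup D with hs
  have hxS : x ∈ SsetD D T x := ⟨hx, le_rfl⟩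
  have hsφ : (0:ℝ) < s - φ := sub_pos.mpr hφ
  set δ : ℝ := ε / (3 * (s - φ)) with hδ
  have hδpos : 0 < δ := by positivity
  have hδs : δ * (s - φ) = ε / 3 := by
    rw [hδ]; field_simp
  set γ : ℝ := min α (δ ^ n) with hγ
  have hγpos : 0 < γ := lt_min hα.1 (pow_pos hδpos n)
  have hγα : γ ≤ α := min_le_left _ _
  have hγδ : γ ≤ δ ^ n := min_le_right _ _
  -- facts about φ
  have hφbdd : BddAbove ((fun z => sortedVec z ⟨0, hn⟩) '' SsetD D T x) := by
    refine ⟨s, ?_⟩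
    rintro _ ⟨z, hzS, rfl⟩
    exact le_csSup hbdd (hzS.1 _)
  have hφne : ((fun z => sortedVec z ⟨0, hn⟩) '' SsetD D T x).Nonempty := ⟨_, x, hxS, rfl⟩
  have hz1le : ∀ z ∈ SsetD D T x, sortedVec z ⟨0, hn⟩ ≤ φ := by
    intro z hzS
    rw [hφdef]
    exact le_csSup hφbdd ⟨z, hzS, rfl⟩
  have hImne : ∀ u : Fin n → ℝ, ((fun z => inducedMean s z u) '' SsetD D T x).Nonempty :=
    fun u => ⟨_, x, hxS, rfl⟩
  -- upper bound on M
  have B1 : ∀ (u : Fin n → ℝ) (lo : ℝ), 0 ≤ lo → (∀ i, lo ≤ u i) → (∀ i, u i ≤ 1) →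
      M u ≤ s - lo * (s - φ) := by
    intro u lo hlo0 hlo hu1
    rw [hMdef]
    refine csSup_le (hImne u) ?_
    rintro _ ⟨z, hzS, rfl⟩
    have h := (inducedMean_bounds hn hbdd hzS.1 u hlo hu1).2
    have hz1 := hz1le z hzS
    rw [← hs] at h
    nlinarith
  -- lower bound on M
  have B2 : ∀ (u : Fin n → ℝ) (hi : ℝ), 0 ≤ hi → (∀ i, 0 ≤ u i) → (∀ i, u i ≤ hi) →
      s - hi * (s - φ) ≤ M u := by
    intro u hi hhi0 hu0 hhi
    refine le_of_forall_pos_le_add fun η hη => ?_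
    have hη' : 0 < η / (hi + 1) := by positivity
    have hlt : φ - η / (hi + 1) < sSup ((fun z => sortedVec z ⟨0, hn⟩) '' SsetD D T x) := by
      rw [← hφdef]; linarith
    obtain ⟨_, ⟨z, hzS, rfl⟩, hza⟩ := exists_lt_of_lt_csSup hφne hlt
    have hb := inducedMean_bounds hn hbdd hzS.1 u hu0 hhi
    rw [← hs] at hb
    have hbdd2 : BddAbove ((fun z => inducedMean s z u) '' SsetD D T x) := by
      refine ⟨s, ?_⟩
      rintro _ ⟨z', hz'S, rfl⟩
      have h := (inducedMean_bounds hn hbdd hz'S.1 u hu0 hhi).2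
      rw [← hs] at h
      linarith
    have hmem : inducedMean s z u ≤ M u := by
      rw [hMdef]
      exact le_csSup hbdd2 ⟨z, hzS, rfl⟩
    have hhisplit : hi * (η / (hi + 1)) ≤ η := by
      rw [mul_div_assoc']
      rw [div_le_iff₀ (by positivity)]
      nlinarith
    nlinarith [hb.1]
  -- Box facts
  set Box : Set (Fin n → ℝ) := Set.pi univ (fun _ : Fin n => Icc (0:ℝ) 1) with hBox
  have hBoxm : MeasurableSet Box := MeasurableSet.univ_pi fun _ => measurableSet_Icc
  have hμBox : μ Box = 1 := by
    rw [hμdef, hBox, unifPi, Measure.pi_pi]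
    have : unif01 (Icc (0:ℝ) 1) = 1 := by
      rw [unif01, Measure.restrict_apply measurableSet_Icc, inter_self, Real.volume_Icc]
      norm_num
    rw [this]
    simp
  have hMle : ∀ u ∈ Box, M u ≤ s := by
    intro u hu
    have := B1 u 0 le_rfl (fun i => (hu i (mem_univ i)).1) (fun i => (hu i (mem_univ i)).2)
    linarith
  have hMge : ∀ u ∈ Box, φ ≤ M u := by
    intro u hu
    have := B2 u 1 zero_le_one (fun i => (hu i (mem_univ i)).1) (fun i => (hu i (mem_univ i)).2)
    linarith
  have hμBoxc : μ Boxᶜ = 0 := by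
    have huniv : μ univ = 1 := by
      rw [hμdef, unifPi, Measure.pi_univ]
      have : unif01 (univ : Set ℝ) = 1 := by
        rw [unif01, Measure.restrict_apply MeasurableSet.univ, univ_inter, Real.volume_Icc]
        norm_num
      rw [this]; simp
    rw [measure_compl hBoxm (by rw [hμBox]; exact ENNReal.one_ne_top), huniv, hμBox]
    simp
  -- members of quantile sets are ≥ φ
  have hQge : ∀ p : ℝ, 0 < p → ∀ y ∈ {y : ℝ | ENNReal.ofReal p ≤ μ {u | M u ≤ y}}, φ ≤ y := by
    intro p hp y hy
    by_contra hlt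
    push_neg at hlt
    have hsub : {u | M u ≤ y} ⊆ Boxᶜ := by
      intro u hu
      intro huB
      exact absurd (le_trans (hMge u huB) hu) (by linarith)
    have h0 : μ {u | M u ≤ y} = 0 := le_antisymm (hμBoxc ▸ measure_mono hsub) zero_le
    simp only [mem_setOf_eq] at hy
    rw [h0] at hy
    exact absurd (le_antisymm hy zero_le) (ne_of_gt (ENNReal.ofReal_pos.mpr hp))
  have hα1 : 0 < 1 - α := by linarith [hα.2]
  have hQ1ne : s ∈ {y : ℝ | ENNReal.ofReal (1 - α) ≤ μ {u | M u ≤ y}} := by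
    have hsub : Box ⊆ {u | M u ≤ s} := fun u hu => hMle u hu
    calc ENNReal.ofReal (1 - α) ≤ 1 := ENNReal.ofReal_le_one.mpr (by linarith [hα.1])
      _ = μ Box := hμBox.symm
      _ ≤ μ {u | M u ≤ s} := measure_mono hsub
  -- unfold rquantile
  show sInf {y : ℝ | ENNReal.ofReal (1 - α + γ) ≤ μ {u | M u ≤ y}}
      ≤ sInf {y : ℝ | ENNReal.ofReal (1 - α) ≤ μ {u | M u ≤ y}} + ε / 3
  refine le_of_forall_pos_le_add fun η hη => ?_
  obtain ⟨y, hyQ1, hylt⟩ := Real.lt_sInf_add_pos ⟨s, hQ1ne⟩ hη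
  have hyφ : φ ≤ y := hQge (1 - α) hα1 y hyQ1
  set c : ℝ := (y - φ) / (s - φ) with hc
  have hc0 : 0 ≤ c := div_nonneg (by linarith) hsφ.le
  have hyc : y = φ + c * (s - φ) := by
    rw [hc]; field_simp; ring
  have hmem2 : y + ε / 3 ∈ {y : ℝ | ENNReal.ofReal (1 - α + γ) ≤ μ {u | M u ≤ y}} := by
    by_cases hcase : 1 ≤ c + δ
    · have hsy : s ≤ y + ε / 3 := by nlinarith [hδs]
      have hsub : Box ⊆ {u | M u ≤ y + ε / 3} := fun u hu => (hMle u hu).trans hsy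
      show ENNReal.ofReal (1 - α + γ) ≤ μ {u | M u ≤ y + ε / 3}
      calc ENNReal.ofReal (1 - α + γ) ≤ 1 := ENNReal.ofReal_le_one.mpr (by linarith)
        _ = μ Box := hμBox.symm
        _ ≤ μ {u | M u ≤ y + ε / 3} := measure_mono hsub
    · push_neg at hcase
      set a : ℝ := 1 - c - δ with ha
      set b : ℝ := 1 - c with hb
      have ha0 : 0 ≤ a := by rw [ha]; linarith
      have hb1 : b ≤ 1 := by rw [hb]; linarith
      have hab : b - a = δ := by rw [ha, hb]; ring
      set Qc : Set (Fin n → ℝ) := Set.pi univ (fun _ : Fin n => Ico a b) with hQc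
      have hQcm : MeasurableSet Qc := MeasurableSet.univ_pi fun _ => measurableSet_Ico
      have hμQc : μ Qc = ENNReal.ofReal (δ ^ n) := by
        rw [hμdef, hQc, unifPi, Measure.pi_pi]
        have hsub : Ico a b ⊆ Icc (0:ℝ) 1 := fun t ht => ⟨le_trans ha0 ht.1, le_trans ht.2.le hb1⟩
        have h1 : unif01 (Ico a b) = ENNReal.ofReal δ := by
          rw [unif01, Measure.restrict_apply measurableSet_Ico, inter_eq_left.mpr hsub,
            Real.volume_Ico, hab]
        rw [h1, Finset.prod_const, Finset.card_univ, Fintype.card_fin,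
          ← ENNReal.ofReal_pow hδpos.le]
      have hQcsub : Qc ⊆ {u | M u ≤ y + ε / 3} := by
        intro u hu
        have hu' : ∀ i, u i ∈ Ico a b := fun i => hu i (mem_univ i)
        have h1 := B1 u a ha0 (fun i => (hu' i).1) (fun i => le_trans (hu' i).2.le hb1)
        show M u ≤ y + ε / 3
        have : s - a * (s - φ) = y + δ * (s - φ) := by rw [ha, hyc]; ring
        rw [this, hδs] at h1
        exact h1
      have hdisj : ∀ u ∈ Qc, ¬(M u ≤ y) := by
        intro u hu hres
        have hu' : ∀ i, u i ∈ Ico a b := fun i => hu i (mem_univ i)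
        set hi : ℝ := Finset.univ.sup' Finset.univ_nonempty u with hhidef
        have hhile : ∀ i, u i ≤ hi := fun i => Finset.le_sup' u (Finset.mem_univ i)
        obtain ⟨i0, -, hi0⟩ := Finset.exists_mem_eq_sup' Finset.univ_nonempty u
        have hhib : hi < b := by rw [hhidef, hi0]; exact (hu' i0).2
        have hhi0 : 0 ≤ hi := le_trans (le_trans ha0 (hu' i0).1) (hhile i0)
        have h2 := B2 u hi hhi0 (fun i => le_trans ha0 (hu' i).1) hhile
        have : y < s - hi * (s - φ) := by rw [hyc, hb] at *; nlinarith
        linarith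
      have key := measure_inter_add_diff (μ := μ) ({u | M u ≤ y} ∪ Qc) hQcm
      have hsub1 : Qc ⊆ ({u | M u ≤ y} ∪ Qc) ∩ Qc := fun u hu => ⟨Or.inr hu, hu⟩
      have hsub2 : {u | M u ≤ y} ⊆ ({u | M u ≤ y} ∪ Qc) \ Qc :=
        fun u hu => ⟨Or.inl hu, fun hq => hdisj u hq hu⟩
      have hAsub : {u | M u ≤ y} ⊆ {u | M u ≤ y + ε / 3} := by
        intro u hu
        have hu' : M u ≤ y := hu
        show M u ≤ y + ε / 3
        linarith
      show ENNReal.ofReal (1 - α + γ) ≤ μ {u | M u ≤ y + ε / 3}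
      calc ENNReal.ofReal (1 - α + γ)
          ≤ ENNReal.ofReal (1 - α) + ENNReal.ofReal (δ ^ n) := by
            rw [← ENNReal.ofReal_add (by linarith) (by positivity)]
            exact ENNReal.ofReal_le_ofReal (by linarith)
        _ ≤ μ {u | M u ≤ y} + μ Qc := add_le_add hyQ1 hμQc.ge
        _ ≤ μ (({u | M u ≤ y} ∪ Qc) \ Qc) + μ (({u | M u ≤ y} ∪ Qc) ∩ Qc) :=
            add_le_add (measure_mono hsub2) (measure_mono hsub1)
        _ = μ ({u | M u ≤ y} ∪ Qc) := by rw [add_comm]; exact key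
        _ ≤ μ {u | M u ≤ y + ε / 3} := measure_mono (union_subset hAsub hQcsub)
  have hbb : BddBelow {y : ℝ | ENNReal.ofReal (1 - α + γ) ≤ μ {u | M u ≤ y}} :=
    ⟨φ, fun y' hy' => hQge (1 - α + γ) (by linarith) y' hy'⟩
  have hfin := csInf_le hbb hmem2
  linarith
end

section
/- (Reduction to Clopper–Pearson.) Let D := {0,1} (so s_D = 1) and T(y) := (1/n)Σ_{i=1}^n y_i be the sample mean. Let x ∈ {0,1}ⁿ and let p := #{i : x_i = 0} be the number of zeros in x. Then, with the convention u_{(0)} := 0, for every u ∈ [0,1]ⁿ: b_{D,T}(x,u) = 1 − u_{(p)}, where u_{(p)} is the p-th order statistic of u (and b_{D,T}(x,u) = 1 when p = 0). Consequently, for U = (U_1,…,U_n) i.i.d. Uniform(0,1) and α ∈ (0,1), b^α_{D,T}(x) = Q(1 − α, 1 − U_{(p)}). -/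
open MeasureTheory Set

private lemma card_filter_lt' {n p : ℕ} (hpn : p ≤ n) :
    (Finset.univ.filter fun i : Fin n => (i:ℕ) < p).card = p := by
  have h : (Finset.univ.map (Fin.castLEEmb hpn))
      = Finset.univ.filter fun i : Fin n => (i:ℕ) < p := by
    ext i
    simp only [Finset.mem_map, Finset.mem_univ, true_and, Finset.mem_filter,
      Fin.castLEEmb_apply, Fin.ext_iff, Fin.coe_castLE]
    constructor
    · rintro ⟨j, hj⟩; rw [← hj]; exact j.isLt
    · intro h; exact ⟨⟨(i:ℕ), h⟩, rfl⟩
  rw [← h, Finset.card_map, Finset.card_univ, Fintype.card_fin]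

private lemma filter_card_comp_perm' {n : ℕ} (z : Fin n → ℝ) (σ : Equiv.Perm (Fin n)) :
    (Finset.univ.filter fun i => z (σ i) = 0).card
      = (Finset.univ.filter fun i => z i = 0).card := by
  rw [← Fintype.card_subtype, ← Fintype.card_subtype]
  exact Fintype.card_congr (σ.subtypeEquiv fun i => Iff.rfl)

private lemma mono01 {n k : ℕ} (g : Fin n → ℝ) (hg : Monotone g)
    (h01 : ∀ i, g i ∈ ({0,1} : Set ℝ))
    (hk : (Finset.univ.filter fun i => g i = 0).card = k) (i : Fin n) :
    g i = if (i : ℕ) < k then 0 else 1 := by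
  have key : ∀ j : Fin n, g j = 0 → Finset.Iic j ⊆ Finset.univ.filter fun i => g i = 0 := by
    intro j hj m hm
    simp only [Finset.mem_Iic] at hm
    simp only [Finset.mem_filter, Finset.mem_univ, true_and]
    have h2 := hg hm
    rcases h01 m with h | h
    · exact h
    · rw [hj] at h2; rw [h] at h2; linarith
  have key2 : ∀ j : Fin n, g j = 1 → (Finset.univ.filter fun i => g i = 0) ⊆ Finset.Iio j := by
    intro j hj m hm
    simp only [Finset.mem_filter] at hm
    simp only [Finset.mem_Iio]
    by_contra h
    push_neg at h
    have h2 := hg h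
    rw [hj, hm.2] at h2; linarith
  rcases h01 i with h | h
  · rw [h, if_pos]
    have := Finset.card_le_card (key i h)
    rw [Fin.card_Iic, hk] at this
    omega
  · rw [h, if_neg]
    have := Finset.card_le_card (key2 i h)
    rw [Fin.card_Iio, hk] at this
    omega

private lemma sortedVec_mono {n : ℕ} (z : Fin n → ℝ) : Monotone (sortedVec z) :=
  Tuple.monotone_sort z

private lemma sorted01 {n : ℕ} (z : Fin n → ℝ) (hz : ∀ i, z i ∈ ({0,1}:Set ℝ)) (i : Fin n) :
    sortedVec z i = if (i:ℕ) < (Finset.univ.filter fun j => z j = 0).card then 0 else 1 := by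
  refine mono01 _ (sortedVec_mono z) (fun j => hz _) ?_ i
  exact filter_card_comp_perm' z (Tuple.sort z)

private lemma sum01 {n : ℕ} (z : Fin n → ℝ) (hz : ∀ i, z i ∈ ({0,1}:Set ℝ)) :
    ∑ i, z i = (n : ℝ) - (Finset.univ.filter fun i => z i = 0).card := by
  have h1 : ∀ i : Fin n, z i = if z i = 0 then 0 else 1 := by
    intro i
    rcases hz i with h | h
    · rw [if_pos h, h]
    · rw [h]; rw [if_neg (by norm_num)]
  rw [Finset.sum_congr rfl fun i _ => h1 i, Finset.sum_ite, Finset.sum_const, Finset.sum_const]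
  have h2 := Finset.card_filter_add_card_filter_not (s := (Finset.univ : Finset (Fin n)))
    (p := fun i => z i = 0)
  rw [Finset.card_univ, Fintype.card_fin] at h2
  have h3 : (Finset.univ.filter fun i => ¬ z i = 0).card
      = n - (Finset.univ.filter fun i => z i = 0).card := by omega
  rw [h3, smul_zero, zero_add, nsmul_eq_mul, mul_one, Nat.cast_sub (by omega)]

private lemma inducedMean01 {n k : ℕ} (z u : Fin n → ℝ) (hz : ∀ i, z i ∈ ({0,1}:Set ℝ))
    (hk : (Finset.univ.filter fun i => z i = 0).card = k) :
    inducedMean 1 z u = 1 - ∑ i : Fin n, (if (i:ℕ) + 1 = k then sortedVec u i else 0) := by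
  have hkn : k ≤ n := by
    rw [← hk]
    calc (Finset.univ.filter fun i => z i = 0).card ≤ (Finset.univ : Finset (Fin n)).card :=
          Finset.card_le_card (Finset.filter_subset _ _)
      _ = n := by simp
  unfold inducedMean
  congr 1
  apply Finset.sum_congr rfl
  intro i _
  have hsz : ∀ j : Fin n, sortedVec z j = if (j:ℕ) < k then 0 else 1 := by
    intro j; rw [sorted01 z hz j, hk]
  have hsnoc : (Fin.snoc (sortedVec z) (1:ℝ) : Fin (n+1) → ℝ) i.succ
      = if (i:ℕ)+1 < k then 0 else 1 := by
    rcases lt_or_eq_of_le (Nat.succ_le_of_lt i.isLt) with h | h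
    · have he : i.succ = Fin.castSucc ⟨(i:ℕ)+1, h⟩ := by
        apply Fin.ext; simp [Fin.val_succ]
      rw [he, Fin.snoc_castSucc, hsz]
    · have he : i.succ = Fin.last n := by
        apply Fin.ext; simp only [Fin.val_succ, Fin.val_last]; omega
      rw [he, Fin.snoc_last, if_neg (by omega)]
  rw [hsnoc, hsz i]
  rcases Nat.lt_trichotomy ((i:ℕ)+1) k with h | h | h
  · rw [if_pos h, if_pos (show (i:ℕ) < k by omega), if_neg (by omega)]; ring
  · rw [if_neg (by omega), if_pos (show (i:ℕ) < k by omega), if_pos h]; ring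
  · rw [if_neg (by omega), if_neg (by omega), if_neg (by omega)]; ring

private lemma inducedMean01zero {n : ℕ} (z u : Fin n → ℝ) (hz : ∀ i, z i ∈ ({0,1}:Set ℝ))
    (hk : (Finset.univ.filter fun i => z i = 0).card = 0) :
    inducedMean 1 z u = 1 := by
  rw [inducedMean01 z u hz hk]
  simp

private lemma inducedMean01pos {n k : ℕ} (z u : Fin n → ℝ) (hz : ∀ i, z i ∈ ({0,1}:Set ℝ))
    (hk : (Finset.univ.filter fun i => z i = 0).card = k) (hk0 : 0 < k) (h1 : k - 1 < n) :
    inducedMean 1 z u = 1 - sortedVec u ⟨k-1, h1⟩ := by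
  rw [inducedMean01 z u hz hk]
  congr 1
  rw [Finset.sum_eq_single (⟨k-1,h1⟩ : Fin n)]
  · rw [if_pos (show ((⟨k-1,h1⟩ : Fin n):ℕ) + 1 = k from by show k-1+1 = k; omega)]
  · intro b _ hb
    exact if_neg fun hc => hb (Fin.ext (show (b:ℕ) = k-1 by omega))
  · intro h; exact absurd (Finset.mem_univ _) h

private lemma sSup01 : sSup ({0,1} : Set ℝ) = 1 := by
  rw [csSup_pair]; exact sup_eq_right.mpr zero_le_one

private lemma mem_S_iff {n : ℕ} (T : (Fin n → ℝ) → ℝ)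
    (hT : ∀ y : Fin n → ℝ, T y = (∑ i, y i) / n)
    (x : Fin n → ℝ) (hx : ∀ i, x i ∈ ({0,1}:Set ℝ)) (y : Fin n → ℝ) :
    y ∈ SsetD ({0,1}:Set ℝ) T x ↔ (∀ i, y i ∈ ({0,1}:Set ℝ)) ∧
      (Finset.univ.filter fun i => x i = 0).card ≤ (Finset.univ.filter fun i => y i = 0).card := by
  unfold SsetD
  simp only [Set.mem_setOf_eq]
  constructor
  · rintro ⟨h1, h2⟩
    refine ⟨h1, ?_⟩
    rcases Nat.eq_zero_or_pos n with hn | hn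
    · subst hn
      simp
    · rw [hT, hT, div_le_div_iff_of_pos_right (by exact_mod_cast hn),
        sum01 y h1, sum01 x hx] at h2
      have h3 : ((Finset.univ.filter fun i => x i = 0).card : ℝ)
          ≤ (Finset.univ.filter fun i => y i = 0).card := by linarith
      exact_mod_cast h3
  · rintro ⟨h1, h2⟩
    refine ⟨h1, ?_⟩
    rcases Nat.eq_zero_or_pos n with hn | hn
    · subst hn
      rw [hT, hT]
      simp
    · rw [hT, hT, div_le_div_iff_of_pos_right (show (0:ℝ) < n by exact_mod_cast hn),
        sum01 y h1, sum01 x hx]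
      have : ((Finset.univ.filter fun i => x i = 0).card : ℝ)
          ≤ (Finset.univ.filter fun i => y i = 0).card := by exact_mod_cast h2
      linarith

private lemma card_filter_le_n {n : ℕ} (P : Fin n → Prop) [DecidablePred P] :
    (Finset.univ.filter P).card ≤ n :=
  (Finset.card_filter_le _ _).trans_eq (by simp)

private lemma sortedVec_mem {n : ℕ} (u : Fin n → ℝ) (hu : ∀ i, u i ∈ Set.Icc (0:ℝ) 1)
    (j : Fin n) : sortedVec u j ∈ Set.Icc (0:ℝ) 1 := hu _

private lemma bfun_eval {n : ℕ} (T : (Fin n → ℝ) → ℝ)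
    (hT : ∀ y : Fin n → ℝ, T y = (∑ i, y i) / n)
    (x : Fin n → ℝ) (hx : ∀ i, x i ∈ ({0,1}:Set ℝ))
    (u : Fin n → ℝ) (hu : ∀ i, u i ∈ Set.Icc (0:ℝ) 1) :
    ((Finset.univ.filter fun i => x i = 0).card = 0 → bfun ({0,1}:Set ℝ) T x u = 1) ∧
    (∀ h1 : (Finset.univ.filter fun i => x i = 0).card - 1 < n,
      0 < (Finset.univ.filter fun i => x i = 0).card →
      bfun ({0,1}:Set ℝ) T x u
        = 1 - sortedVec u ⟨(Finset.univ.filter fun i => x i = 0).card - 1, h1⟩) := by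
  set p := (Finset.univ.filter fun i => x i = 0).card with hpdef
  have hbfun : bfun ({0,1}:Set ℝ) T x u
      = sSup ((fun z => inducedMean 1 z u) '' SsetD ({0,1}:Set ℝ) T x) := by
    unfold bfun; rw [sSup01]
  constructor
  · intro hp0
    rw [hbfun]
    apply IsGreatest.csSup_eq
    constructor
    · refine ⟨fun _ => 1, ?_, ?_⟩
      · rw [mem_S_iff T hT x hx]
        exact ⟨fun i => Or.inr rfl, by omega⟩
      · exact inducedMean01zero _ u (fun i => Or.inr rfl) (by simp)
    · rintro v ⟨z, hzS, rfl⟩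
      dsimp only
      rw [mem_S_iff T hT x hx] at hzS
      obtain ⟨hz01, hk⟩ := hzS
      rcases Nat.eq_zero_or_pos (Finset.univ.filter fun i => z i = 0).card with hz0 | hzpos
      · rw [inducedMean01zero z u hz01 hz0]
      · have hkn : (Finset.univ.filter fun i => z i = 0).card ≤ n := card_filter_le_n _
        rw [inducedMean01pos z u hz01 rfl hzpos (by omega)]
        have := (sortedVec_mem u hu ⟨(Finset.univ.filter fun i => z i = 0).card - 1, by omega⟩).1
        linarith
  · intro h1 hp0
    have hpn : p ≤ n := by omega
    rw [hbfun]
    apply IsGreatest.csSup_eq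
    constructor
    · refine ⟨fun i => if (i:ℕ) < p then (0:ℝ) else 1, ?_, ?_⟩
      · rw [mem_S_iff T hT x hx]
        have hz01 : ∀ i : Fin n, (if (i:ℕ) < p then (0:ℝ) else 1) ∈ ({0,1}:Set ℝ) := by
          intro i
          split
          · exact Or.inl rfl
          · exact Or.inr rfl
        refine ⟨hz01, ?_⟩
        have hfe : (Finset.univ.filter fun i : Fin n => (if (i:ℕ) < p then (0:ℝ) else 1) = 0)
            = Finset.univ.filter fun i : Fin n => (i:ℕ) < p := by
          ext i
          simp only [Finset.mem_filter, Finset.mem_univ, true_and]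
          constructor
          · intro h
            by_contra hc
            rw [if_neg hc] at h
            norm_num at h
          · intro h
            rw [if_pos h]
        rw [hfe, card_filter_lt' hpn]
      · have hz01 : ∀ i : Fin n, (if (i:ℕ) < p then (0:ℝ) else 1) ∈ ({0,1}:Set ℝ) := by
          intro i
          split
          · exact Or.inl rfl
          · exact Or.inr rfl
        have hfe : (Finset.univ.filter fun i : Fin n => (if (i:ℕ) < p then (0:ℝ) else 1) = 0)
            = Finset.univ.filter fun i : Fin n => (i:ℕ) < p := by
          ext i
          simp only [Finset.mem_filter, Finset.mem_univ, true_and]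
          constructor
          · intro h
            by_contra hc
            rw [if_neg hc] at h
            norm_num at h
          · intro h
            rw [if_pos h]
        exact inducedMean01pos _ u hz01 (by rw [hfe, card_filter_lt' hpn]) hp0 h1
    · rintro v ⟨z, hzS, rfl⟩
      dsimp only
      rw [mem_S_iff T hT x hx] at hzS
      obtain ⟨hz01, hk⟩ := hzS
      have hkpos : 0 < (Finset.univ.filter fun i => z i = 0).card := by omega
      have hkn : (Finset.univ.filter fun i => z i = 0).card ≤ n := card_filter_le_n _
      rw [inducedMean01pos z u hz01 rfl hkpos (by omega)]
      have hmono : sortedVec u ⟨p - 1, h1⟩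
          ≤ sortedVec u ⟨(Finset.univ.filter fun i => z i = 0).card - 1, by omega⟩ :=
        sortedVec_mono u (by simp only [Fin.mk_le_mk]; omega)
      linarith

private lemma unif01_Icc : unif01 (Icc (0:ℝ) 1) = 1 := by
  unfold unif01
  rw [Measure.restrict_apply measurableSet_Icc, Set.inter_self, Real.volume_Icc]
  norm_num

private lemma unif01_univ : unif01 (Set.univ : Set ℝ) = 1 := by
  unfold unif01
  rw [Measure.restrict_apply MeasurableSet.univ, Set.univ_inter, Real.volume_Icc]
  norm_num

private instance : MeasureTheory.IsFiniteMeasure unif01 :=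
  ⟨by rw [unif01_univ]; exact ENNReal.one_lt_top⟩

private lemma unifPi_ae_Icc (n : ℕ) :
    ∀ᵐ u ∂(unifPi n), u ∈ Set.pi Set.univ fun _ : Fin n => Set.Icc (0:ℝ) 1 := by
  rw [MeasureTheory.ae_iff]
  have hms : MeasurableSet (Set.pi Set.univ fun _ : Fin n => Set.Icc (0:ℝ) 1) :=
    MeasurableSet.univ_pi fun _ => measurableSet_Icc
  have hA : (unifPi n) (Set.pi Set.univ fun _ : Fin n => Set.Icc (0:ℝ) 1) = 1 := by
    unfold unifPi
    rw [Measure.pi_pi]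
    simp [unif01_Icc]
  have huniv : (unifPi n) Set.univ = 1 := by
    unfold unifPi
    rw [Measure.pi_univ]
    simp [unif01_univ]
  have : {a | ¬ a ∈ Set.pi Set.univ fun _ : Fin n => Set.Icc (0:ℝ) 1}
      = (Set.pi Set.univ fun _ : Fin n => Set.Icc (0:ℝ) 1)ᶜ := rfl
  rw [this, measure_compl hms (by rw [hA]; exact ENNReal.one_ne_top), huniv, hA, tsub_self]

private lemma rquantile_congr {n : ℕ} (f g : (Fin n → ℝ) → ℝ)
    (h : ∀ u : Fin n → ℝ, (∀ i, u i ∈ Set.Icc (0:ℝ) 1) → f u = g u) (q : ℝ) :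
    rquantile (unifPi n) f q = rquantile (unifPi n) g q := by
  unfold rquantile
  congr 1
  ext y
  have hme : (unifPi n) {u | f u ≤ y} = (unifPi n) {u | g u ≤ y} := by
    apply measure_congr
    rw [Filter.eventuallyEq_set]
    filter_upwards [unifPi_ae_Icc n] with u hu
    show f u ≤ y ↔ g u ≤ y
    rw [h u (fun i => hu i (Set.mem_univ i))]
  show ENNReal.ofReal q ≤ (unifPi n) {ω | f ω ≤ y} ↔ ENNReal.ofReal q ≤ (unifPi n) {ω | g ω ≤ y}
  rw [hme]

/-- Reduction to Clopper–Pearson: for `D = {0,1}` and `T` the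
sample mean, with `p` the number of zeros in `x` and the convention
`u_{(0)} := 0`, one has `b_{D,T}(x, u) = 1 - u_{(p)}` for every `u ∈ [0,1]ⁿ`
(so `b = 1` when `p = 0`), and consequently
`b^α_{D,T}(x) = Q(1 - α, 1 - U_{(p)})`. -/
theorem stmt18 {n : ℕ} (T : (Fin n → ℝ) → ℝ)
    (hT : ∀ y : Fin n → ℝ, T y = (∑ i, y i) / n)
    (x : Fin n → ℝ) (hx : ∀ i, x i ∈ ({0, 1} : Set ℝ))
    (p : ℕ) (hp : p = Nat.card {i : Fin n // x i = 0})
    (α : ℝ) (hα : α ∈ Set.Ioo (0:ℝ) 1) :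
    (∀ u : Fin n → ℝ, (∀ i, u i ∈ Set.Icc (0:ℝ) 1) →
      (p = 0 → bfun ({0, 1} : Set ℝ) T x u = 1) ∧
      (∀ hpn : p - 1 < n, 0 < p →
        bfun ({0, 1} : Set ℝ) T x u = 1 - sortedVec u ⟨p - 1, hpn⟩)) ∧
    (p = 0 → ucb ({0, 1} : Set ℝ) T α x
        = rquantile (unifPi n) (fun _ => (1 : ℝ)) (1 - α)) ∧
    (∀ hpn : p - 1 < n, 0 < p →
      ucb ({0, 1} : Set ℝ) T α x
        = rquantile (unifPi n) (fun u => 1 - sortedVec u ⟨p - 1, hpn⟩) (1 - α)) := by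
  have hpf : (Finset.univ.filter fun i => x i = 0).card = p := by
    rw [hp, Nat.card_eq_fintype_card, Fintype.card_subtype]
  have main : ∀ u : Fin n → ℝ, (∀ i, u i ∈ Set.Icc (0:ℝ) 1) →
      (p = 0 → bfun ({0, 1} : Set ℝ) T x u = 1) ∧
      (∀ hpn : p - 1 < n, 0 < p →
        bfun ({0, 1} : Set ℝ) T x u = 1 - sortedVec u ⟨p - 1, hpn⟩) := by
    intro u hu
    have h := bfun_eval T hT x hx u hu
    rw [hpf] at h
    exact h
  refine ⟨main, ?_, ?_⟩
  · intro hp0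
    unfold ucb
    exact rquantile_congr _ _ (fun u hu => (main u hu).1 hp0) _
  · intro hpn hp0
    unfold ucb
    exact rquantile_congr _ _ (fun u hu => (main u hu).2 hpn hp0) _
end
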